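/- arXiv:math/0412091 — 5 statements merged into one kernel-verified Lean document; each statement's English description precedes it below -/
import Mathlib

section
/- The statistics maj and rmaj_n are equidistributed on the set {σ ∈ S_n : des(σ) = s} for every s; that is, for each s and each m, the number of permutations σ ∈ S_n with des(σ)=s and maj(σ)=m equals the number with des(σ)=s and rmaj_n(σ)=m. -/
open Finset
open scoped Classical

/-- The descent set of a permutation of `{1,…,n}` (0-based: `i ∈ DesC σ` means a
descent at the (i+1)-st position, i.e. `σ(i+1) > σ(i+2)` in 1-based notation). -/
noncomputable def DesC {n : ℕ} (σ : Equiv.Perm (Fin n)) : Finset ℕ :=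
  (Finset.range (n - 1)).filter (fun i =>
    ∃ h : i + 1 < n, σ ⟨i + 1, h⟩ < σ ⟨i, by omega⟩)

noncomputable def desC {n : ℕ} (σ : Equiv.Perm (Fin n)) : ℕ := (DesC σ).card

/-- `maj(σ) = Σ_{i ∈ Des(σ)} i` (1-based positions). -/
noncomputable def majC {n : ℕ} (σ : Equiv.Perm (Fin n)) : ℕ := ∑ i ∈ DesC σ, (i + 1)

/-- `rmaj_n(σ) = Σ_{i ∈ Des(σ)} (n - i)` (1-based positions). -/
noncomputable def rmajC {n : ℕ} (σ : Equiv.Perm (Fin n)) : ℕ := ∑ i ∈ DesC σ, (n - (i + 1))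

/-- The reverse-complement involution. -/
noncomputable def revP {n : ℕ} (σ : Equiv.Perm (Fin n)) : Equiv.Perm (Fin n) :=
  Fin.revPerm.trans (σ.trans Fin.revPerm)

lemma revP_revP {n : ℕ} (σ : Equiv.Perm (Fin n)) : revP (revP σ) = σ := by
  ext x
  simp [revP]

lemma mem_DesC_revP {n : ℕ} (σ : Equiv.Perm (Fin n)) (i : ℕ) (hi : i < n - 1) :
    i ∈ DesC (revP σ) ↔ n - 2 - i ∈ DesC σ := by
  have h1 : i + 1 < n := by omega
  have h2 : n - 2 - i + 1 < n := by omega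
  simp only [DesC, Finset.mem_filter, Finset.mem_range]
  constructor
  · rintro ⟨-, h, hlt⟩
    refine ⟨by omega, h2, ?_⟩
    simp only [revP, Equiv.trans_apply, Fin.revPerm_apply] at hlt
    rw [Fin.rev_lt_rev] at hlt
    have e1 : (⟨i + 1, h1⟩ : Fin n).rev = ⟨n - 2 - i, by omega⟩ := by
      simp [Fin.rev]; omega
    have e2 : (⟨i, by omega⟩ : Fin n).rev = ⟨n - 2 - i + 1, h2⟩ := by
      simp [Fin.rev]; omega
    rwa [e1, e2] at hlt
  · rintro ⟨-, h, hlt⟩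
    refine ⟨hi, h1, ?_⟩
    simp only [revP, Equiv.trans_apply, Fin.revPerm_apply]
    rw [Fin.rev_lt_rev]
    have e1 : (⟨i + 1, h1⟩ : Fin n).rev = ⟨n - 2 - i, by omega⟩ := by
      simp [Fin.rev]; omega
    have e2 : (⟨i, by omega⟩ : Fin n).rev = ⟨n - 2 - i + 1, h2⟩ := by
      simp [Fin.rev]; omega
    rw [e1, e2]
    exact hlt

lemma DesC_revP {n : ℕ} (σ : Equiv.Perm (Fin n)) :
    DesC (revP σ) = (DesC σ).image (fun j => n - 2 - j) := by
  ext i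
  have hmem : ∀ τ : Equiv.Perm (Fin n), ∀ j ∈ DesC τ, j < n - 1 := by
    intro τ j hj
    exact Finset.mem_range.mp (Finset.mem_filter.mp hj).1
  simp only [Finset.mem_image]
  constructor
  · intro hi
    have hi' := hmem _ _ hi
    exact ⟨n - 2 - i, (mem_DesC_revP σ i hi').mp hi, by omega⟩
  · rintro ⟨j, hj, rfl⟩
    have hj' := hmem _ _ hj
    apply (mem_DesC_revP σ (n - 2 - j) (by omega)).mpr
    have h3 : n - 2 - (n - 2 - j) = j := by omega
    rw [h3]; exact hj

lemma injOn_aux {n : ℕ} (σ : Equiv.Perm (Fin n)) :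
    Set.InjOn (fun j => n - 2 - j) (DesC σ) := by
  intro a ha b hb hab
  have ha' : a < n - 1 := Finset.mem_range.mp (Finset.mem_filter.mp ha).1
  have hb' : b < n - 1 := Finset.mem_range.mp (Finset.mem_filter.mp hb).1
  simp only at hab
  omega

lemma desC_revP {n : ℕ} (σ : Equiv.Perm (Fin n)) : desC (revP σ) = desC σ := by
  rw [desC, DesC_revP, Finset.card_image_of_injOn (injOn_aux σ), desC]

lemma majC_revP {n : ℕ} (σ : Equiv.Perm (Fin n)) : majC (revP σ) = rmajC σ := by
  rw [majC, DesC_revP, Finset.sum_image (fun a ha b hb => injOn_aux σ ha hb), rmajC]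
  apply Finset.sum_congr rfl
  intro j hj
  have hj' : j < n - 1 := Finset.mem_range.mp (Finset.mem_filter.mp hj).1
  omega

lemma rmajC_revP {n : ℕ} (σ : Equiv.Perm (Fin n)) : rmajC (revP σ) = majC σ := by
  conv_rhs => rw [← revP_revP σ, majC_revP]

/-- `maj` and `rmaj_n` are equidistributed on `{σ ∈ S_n : des σ = s}` for every `s`. -/
theorem maj_rmaj_equidistributed (n s m : ℕ) :
    (Finset.univ.filter
        (fun σ : Equiv.Perm (Fin n) => desC σ = s ∧ majC σ = m)).card =
    (Finset.univ.filter
        (fun σ : Equiv.Perm (Fin n) => desC σ = s ∧ rmajC σ = m)).card := by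
  apply Finset.card_nbij' (fun σ => revP σ) (fun σ => revP σ)
  · intro σ hσ
    simp only [Finset.mem_coe, Finset.mem_filter, Finset.mem_univ, true_and] at hσ ⊢
    exact ⟨by rw [desC_revP]; exact hσ.1, by rw [rmajC_revP]; exact hσ.2⟩
  · intro σ hσ
    simp only [Finset.mem_coe, Finset.mem_filter, Finset.mem_univ, true_and] at hσ ⊢
    exact ⟨by rw [desC_revP]; exact hσ.1, by rw [majC_revP]; exact hσ.2⟩
  · intro σ _; exact revP_revP σ
  · intro σ _; exact revP_revP σ
end

section
/- Insertion preserves or increments descents: let σ ∈ C_a ≀ S_{n-1} with L-descent set Des_L(σ) = {i_1 < ⋯ < i_s} (so s = des_L(σ)) and let {i_{s+1} > ⋯ > i_n} = {0,…,n-1} \ Des_L(σ). Then for 1 ≤ k ≤ n and 0 ≤ t ≤ a-1, des_L(φ_n(σ, i_k, t)) equals s if (k < s+1) or (k = s+1 and t ∉ L), and equals s+1 if (k > s+1) or (k = s+1 and t ∈ L). -/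
open Finset Polynomial
open scoped Classical

/-- An element of the wreath product `C_a ≀ S_n`, viewed as a colored permutation:
the window is `[σ(1),…,σ(n)]` where `|σ(i)| = π(i)` (1-based) and the color of the
letter in position `i` is `c(i)`, i.e. `σ(i) = α^{c(i)} |σ(i)|`. -/
abbrev ColPerm (a n : ℕ) := Equiv.Perm (Fin n) × (Fin n → Fin a)

/-- A rank function realizing (a canonical choice of) the linear order `<_L` of
Regev–Roichman on the letters `α^t j` (encoded as the pair `(t, j)` with `1 ≤ j`)
together with `0` (encoded as `(t, 0)`): letters with color in `L` are negative,
ordered with larger absolute value smaller; letters with color not in `L` are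
positive, ordered with larger absolute value larger; `x <_L y ↔ rkL L x < rkL L y`. -/
def rkL {a : ℕ} (L : Finset (Fin a)) (x : Fin a × ℕ) : ℤ :=
  if x.2 = 0 then 0
  else if x.1 ∈ L then -((x.2 : ℤ) * a + (x.1 : ℤ)) else (x.2 : ℤ) * a + (x.1 : ℤ)

/-- The letter `σ(i)` (as a color/absolute-value pair) in position `i` (1-based) of
the window of `σ`; positions outside `{1,…,n}` give the letter `0`. -/
def wval {a n : ℕ} [NeZero a] (σ : ColPerm a n) (i : ℕ) : Fin a × ℕ :=
  if h : 1 ≤ i ∧ i ≤ n then (σ.2 ⟨i - 1, by omega⟩, (σ.1 ⟨i - 1, by omega⟩ : ℕ) + 1)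
  else (0, 0)

/-- The `L`-descent set `Des_L(σ) = {0 ≤ i ≤ n-1 : σ(i) >_L σ(i+1)}`, with `σ(0) := 0`. -/
def DesL {a n : ℕ} [NeZero a] (L : Finset (Fin a)) (σ : ColPerm a n) : Finset ℕ :=
  (Finset.range n).filter (fun i => rkL L (wval σ (i + 1)) < rkL L (wval σ i))

/-- The `L`-descent number `des_L(σ) = |Des_L(σ)|`. -/
def desL {a n : ℕ} [NeZero a] (L : Finset (Fin a)) (σ : ColPerm a n) : ℕ := (DesL L σ).card

/-- The `L`-reverse major index `rmaj_{L,n}(σ) = Σ_{i ∈ Des_L(σ)} (n - i)`. -/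
def rmajL {a n : ℕ} [NeZero a] (L : Finset (Fin a)) (σ : ColPerm a n) : ℕ :=
  ∑ i ∈ DesL L σ, (n - i)

/-- The insertion map `φ_{n+1}(σ, r, t) = [σ_1,…,σ_r, α^t (n+1), σ_{r+1},…,σ_n]`,
inserting the letter `α^t (n+1)` after position `r` in the window of `σ ∈ C_a ≀ S_n`. -/
def phi {a n : ℕ} (σ : ColPerm a n) (r : Fin (n + 1)) (t : Fin a) : ColPerm a (n + 1) :=
  (((Fin.revPerm.trans (Fin.cycleRange r.rev)).trans Fin.revPerm).trans
      ((finSuccEquivLast.trans (Equiv.optionCongr σ.1)).trans finSuccEquivLast.symm),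
   Fin.insertNth r t σ.2)

/-! ### Auxiliary lemmas -/
lemma val_rev' {n : ℕ} (i : Fin (n+1)) : ((Fin.rev i) : ℕ) = n - i := by
  rw [Fin.val_rev]; omega

lemma phi_fst_lt {a n : ℕ} (σ : ColPerm a n) (r : Fin (n+1)) (t : Fin a)
    (j : Fin (n+1)) (hj : (j:ℕ) < r) :
    (phi σ r t).1 j = Fin.castSucc (σ.1 ⟨j, by omega⟩) := by
  have hjr : j < r := hj
  have h1 : Fin.cycleRange r.rev j.rev = j.rev :=
    Fin.cycleRange_of_gt (by simpa using Fin.rev_lt_rev.mpr hjr)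
  have hjn : (j:ℕ) < n := by have := r.isLt; omega
  have hj3 : finSuccEquivLast j = some ⟨j, hjn⟩ := by
    have hj2 : j = Fin.castSucc ⟨j, hjn⟩ := by ext; rfl
    conv_lhs => rw [hj2]
    exact finSuccEquivLast_castSucc _
  simp only [phi, Equiv.trans_apply, Fin.revPerm_apply, h1, Fin.rev_rev, hj3]
  simp

lemma phi_fst_eq {a n : ℕ} (σ : ColPerm a n) (r : Fin (n+1)) (t : Fin a) :
    (phi σ r t).1 r = Fin.last n := by
  have h1 : Fin.cycleRange r.rev r.rev = 0 := Fin.cycleRange_self _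
  simp only [phi, Equiv.trans_apply, Fin.revPerm_apply, h1]
  have : (0 : Fin (n+1)).rev = Fin.last n := by
    ext; rw [val_rev']; simp [Fin.last]
  rw [this, finSuccEquivLast_last]
  simp

lemma phi_fst_gt {a n : ℕ} (σ : ColPerm a n) (r : Fin (n+1)) (t : Fin a)
    (j : Fin (n+1)) (hj : (r:ℕ) < j) :
    (phi σ r t).1 j = Fin.castSucc (σ.1 ⟨(j:ℕ)-1, by omega⟩) := by
  have hjr : r < j := hj
  have h1 : Fin.cycleRange r.rev j.rev = j.rev + 1 :=
    Fin.cycleRange_of_lt (by simpa using Fin.rev_lt_rev.mpr hjr)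
  have hjn' := j.isLt
  have hco : ((j.rev + 1 : Fin (n+1)) : ℕ) = n - (j:ℕ) + 1 := by
    rw [Fin.val_add_one_of_lt]
    · rw [val_rev']
    · rw [Fin.lt_iff_val_lt_val, val_rev', Fin.val_last]; omega
  have h2 : ((j.rev + 1 : Fin (n+1)).rev : ℕ) = (j:ℕ) - 1 := by
    rw [val_rev', hco]; omega
  have hjn : (j:ℕ) - 1 < n := by omega
  have hj3 : finSuccEquivLast (j.rev + 1 : Fin (n+1)).rev = some ⟨(j:ℕ)-1, hjn⟩ := by
    have hj2 : (j.rev + 1 : Fin (n+1)).rev = Fin.castSucc ⟨(j:ℕ)-1, hjn⟩ := by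
      ext; simpa using h2
    rw [hj2]; exact finSuccEquivLast_castSucc _
  simp only [phi, Equiv.trans_apply, Fin.revPerm_apply, h1, hj3]
  simp

lemma phi_snd_lt {a n : ℕ} (σ : ColPerm a n) (r : Fin (n+1)) (t : Fin a)
    (j : Fin (n+1)) (hj : (j:ℕ) < r) :
    (phi σ r t).2 j = σ.2 ⟨j, by omega⟩ := by
  have hjn : (j:ℕ) < n := by have := r.isLt; omega
  have h : j = r.succAbove ⟨j, hjn⟩ := by
    rw [Fin.succAbove_of_castSucc_lt _ _ (by exact hj)]
    ext; rfl
  conv_lhs => rw [h]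
  simp [phi]

lemma phi_snd_eq {a n : ℕ} (σ : ColPerm a n) (r : Fin (n+1)) (t : Fin a) :
    (phi σ r t).2 r = t := by
  simp [phi]

lemma phi_snd_gt {a n : ℕ} (σ : ColPerm a n) (r : Fin (n+1)) (t : Fin a)
    (j : Fin (n+1)) (hj : (r:ℕ) < j) :
    (phi σ r t).2 j = σ.2 ⟨(j:ℕ)-1, by omega⟩ := by
  have hjn : (j:ℕ) - 1 < n := by have := j.isLt; omega
  have h : j = r.succAbove ⟨(j:ℕ)-1, hjn⟩ := by
    rw [Fin.succAbove_of_le_castSucc]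
    · ext; simp [Fin.succ]; omega
    · rw [Fin.le_iff_val_le_val]; simp; omega
  conv_lhs => rw [h]
  simp [phi]

lemma wval_snd_le {a n : ℕ} [NeZero a] (σ : ColPerm a n) (i : ℕ) : (wval σ i).2 ≤ n := by
  unfold wval; split
  · next h => simp
  · simp

lemma rk_new_lt {a n : ℕ} [NeZero a] (L : Finset (Fin a)) (t : Fin a) (ht : t ∈ L)
    (x : Fin a × ℕ) (hx : x.2 ≤ n) : rkL L (t, n+1) < rkL L x := by
  have ha : 1 ≤ a := Nat.one_le_iff_ne_zero.mpr (NeZero.ne a)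
  have ht1 : (t : ℤ) < a := by exact_mod_cast t.isLt
  have hx1 : (x.1 : ℤ) < a := by exact_mod_cast x.1.isLt
  have ht0 : (0:ℤ) ≤ t := Int.natCast_nonneg _
  have hx0 : (0:ℤ) ≤ x.1 := Int.natCast_nonneg _
  have hmul : (x.2 : ℤ) * a ≤ (n : ℤ) * a := by
    apply mul_le_mul_of_nonneg_right (by exact_mod_cast hx) (by positivity)
  have ha' : (1:ℤ) ≤ a := by exact_mod_cast ha
  unfold rkL
  simp only [ht, if_true]
  norm_num
  split
  · next h => nlinarith
  · split
    · next h1 h2 => nlinarith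
    · next h1 h2 => nlinarith

lemma rk_lt_new {a n : ℕ} [NeZero a] (L : Finset (Fin a)) (t : Fin a) (ht : t ∉ L)
    (x : Fin a × ℕ) (hx : x.2 ≤ n) : rkL L x < rkL L (t, n+1) := by
  have ha : 1 ≤ a := Nat.one_le_iff_ne_zero.mpr (NeZero.ne a)
  have ht1 : (t : ℤ) < a := by exact_mod_cast t.isLt
  have hx1 : (x.1 : ℤ) < a := by exact_mod_cast x.1.isLt
  have ht0 : (0:ℤ) ≤ t := Int.natCast_nonneg _
  have hx0 : (0:ℤ) ≤ x.1 := Int.natCast_nonneg _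
  have hmul : (x.2 : ℤ) * a ≤ (n : ℤ) * a := by
    apply mul_le_mul_of_nonneg_right (by exact_mod_cast hx) (by positivity)
  have ha' : (1:ℤ) ≤ a := by exact_mod_cast ha
  unfold rkL
  simp only [ht, if_false]
  norm_num
  split
  · next h => nlinarith
  · split
    · next h1 h2 => nlinarith
    · next h1 h2 => nlinarith

lemma wval_phi_le {a n : ℕ} [NeZero a] (σ : ColPerm a n) (r : Fin (n+1)) (t : Fin a)
    (i : ℕ) (hi : i ≤ (r:ℕ)) : wval (phi σ r t) i = wval σ i := by
  rcases Nat.eq_zero_or_pos i with h0 | h1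
  · subst h0; unfold wval; rw [dif_neg (by omega), dif_neg (by omega)]
  · have hrn := r.isLt
    have hin : i ≤ n := by omega
    unfold wval
    rw [dif_pos ⟨h1, by omega⟩, dif_pos ⟨h1, hin⟩]
    have hj : ((⟨i-1, by omega⟩ : Fin (n+1)) : ℕ) < (r:ℕ) := by simp; omega
    rw [phi_fst_lt σ r t _ hj, phi_snd_lt σ r t _ hj]
    simp

lemma wval_phi_mid {a n : ℕ} [NeZero a] (σ : ColPerm a n) (r : Fin (n+1)) (t : Fin a) :
    wval (phi σ r t) ((r:ℕ)+1) = (t, n+1) := by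
  have hrn := r.isLt
  unfold wval
  rw [dif_pos ⟨by omega, by omega⟩]
  have hj : (⟨(r:ℕ)+1-1, by omega⟩ : Fin (n+1)) = r := by ext; simp
  rw [hj, phi_fst_eq, phi_snd_eq]
  simp [Fin.last]

lemma wval_phi_ge {a n : ℕ} [NeZero a] (σ : ColPerm a n) (r : Fin (n+1)) (t : Fin a)
    (i : ℕ) (hi : (r:ℕ)+2 ≤ i) : wval (phi σ r t) i = wval σ (i-1) := by
  rcases Nat.lt_or_ge (n+1) i with h0 | h1
  · unfold wval; rw [dif_neg (by omega), dif_neg (by omega)]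
  · unfold wval
    rw [dif_pos ⟨by omega, h1⟩, dif_pos ⟨by omega, by omega⟩]
    have hj : ((r:ℕ)) < ((⟨i-1, by omega⟩ : Fin (n+1)) : ℕ) := by simp; omega
    rw [phi_fst_gt σ r t _ hj, phi_snd_gt σ r t _ hj]
    simp

/-- The descent set of the insertion. -/
lemma DesL_phi {a n : ℕ} [NeZero a] (L : Finset (Fin a)) (σ : ColPerm a n)
    (r : Fin (n+1)) (t : Fin a) :
    DesL L (phi σ r t) =
      ((DesL L σ).filter (· < (r:ℕ)) ∪
        ((DesL L σ).filter (fun d => (r:ℕ) < d)).image (· + 1)) ∪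
      (if t ∈ L then {(r:ℕ)} else if (r:ℕ) < n then {(r:ℕ)+1} else ∅) := by
  have hrn : (r:ℕ) ≤ n := by have := r.isLt; omega
  set ρ := (r:ℕ) with hρ
  ext i
  have hB : ∀ x : ℕ, (x ∈ (if t ∈ L then {ρ} else if ρ < n then {ρ+1} else (∅:Finset ℕ)))
      ↔ ((t ∈ L ∧ x = ρ) ∨ (t ∉ L ∧ ρ < n ∧ x = ρ+1)) := by
    intro x
    by_cases h1 : t ∈ L
    · simp [h1]
    · by_cases h2 : ρ < n <;> simp [h1, h2]
  simp only [DesL, mem_filter, mem_range, mem_union, mem_image, hB]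
  rcases lt_trichotomy i ρ with hc | hc | hc
  · rw [wval_phi_le σ r t i (by omega), wval_phi_le σ r t (i+1) (by omega)]
    constructor
    · rintro ⟨h1, h2⟩
      exact Or.inl (Or.inl ⟨⟨by omega, h2⟩, hc⟩)
    · rintro ((⟨⟨h1, h2⟩, h3⟩ | ⟨d, ⟨⟨hd1, hd2⟩, hd3⟩, hd4⟩) | (⟨h1, h2⟩ | ⟨h1, h2, h3⟩)) <;>
        first
        | exact ⟨by omega, by assumption⟩
        | omega
  · subst hc
    rw [wval_phi_le σ r t ρ (le_refl _), wval_phi_mid]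
    constructor
    · rintro ⟨h1, h2⟩
      by_cases hL : t ∈ L
      · exact Or.inr (Or.inl ⟨hL, rfl⟩)
      · exact absurd h2 (not_lt.mpr (le_of_lt (rk_lt_new L t hL _ (wval_snd_le σ ρ))))
    · rintro ((⟨⟨h1, h2⟩, h3⟩ | ⟨d, ⟨⟨hd1, hd2⟩, hd3⟩, hd4⟩) | (⟨h1, h2⟩ | ⟨h1, h2, h3⟩))
      · omega
      · omega
      · exact ⟨by omega, rk_new_lt L t h1 _ (wval_snd_le σ ρ)⟩
      · omega
  · rcases Nat.lt_or_ge i (ρ + 2) with hc2 | hc2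
    · -- i = ρ + 1
      have hi : i = ρ + 1 := by omega
      subst hi
      rcases Nat.lt_or_ge ρ n with hρn | hρn
      · rw [wval_phi_mid, wval_phi_ge σ r t (ρ+1+1) (by omega)]
        have : ρ + 1 + 1 - 1 = ρ + 1 := by omega
        rw [this]
        constructor
        · rintro ⟨h1, h2⟩
          by_cases hL : t ∈ L
          · exact absurd h2 (not_lt.mpr (le_of_lt (rk_new_lt L t hL _ (wval_snd_le σ (ρ+1)))))
          · exact Or.inr (Or.inr ⟨hL, hρn, rfl⟩)
        · rintro ((⟨⟨h1, h2⟩, h3⟩ | ⟨d, ⟨⟨hd1, hd2⟩, hd3⟩, hd4⟩) | (⟨h1, h2⟩ | ⟨h1, h2, h3⟩))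
          · omega
          · omega
          · omega
          · exact ⟨by omega, rk_lt_new L t h1 _ (wval_snd_le σ (ρ+1))⟩
      · -- ρ = n, i = n + 1 : both sides false
        constructor
        · rintro ⟨h1, h2⟩; omega
        · rintro ((⟨⟨h1, h2⟩, h3⟩ | ⟨d, ⟨⟨hd1, hd2⟩, hd3⟩, hd4⟩) | (⟨h1, h2⟩ | ⟨h1, h2, h3⟩)) <;>
            omega
    · -- i ≥ ρ + 2
      rcases Nat.lt_or_ge n i with hin | hin
      · -- i ≥ n + 1 : both sides false
        constructor
        · rintro ⟨h1, h2⟩; omega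
        · rintro ((⟨⟨h1, h2⟩, h3⟩ | ⟨d, ⟨⟨hd1, hd2⟩, hd3⟩, hd4⟩) | (⟨h1, h2⟩ | ⟨h1, h2, h3⟩)) <;>
            omega
      · rw [wval_phi_ge σ r t i hc2, wval_phi_ge σ r t (i+1) (by omega)]
        have h' : i + 1 - 1 = (i - 1) + 1 := by omega
        rw [h']
        constructor
        · rintro ⟨h1, h2⟩
          exact Or.inl (Or.inr ⟨i - 1, ⟨⟨by omega, h2⟩, by omega⟩, by omega⟩)
        · rintro ((⟨⟨h1, h2⟩, h3⟩ | ⟨d, ⟨⟨hd1, hd2⟩, hd3⟩, hd4⟩) | (⟨h1, h2⟩ | ⟨h1, h2, h3⟩))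
          · omega
          · have : d = i - 1 := by omega
            subst this
            exact ⟨by omega, hd2⟩
          · omega
          · omega

/-- The descent number of the insertion. -/
lemma desL_phi_card {a n : ℕ} [NeZero a] (L : Finset (Fin a)) (σ : ColPerm a n)
    (r : Fin (n+1)) (t : Fin a) :
    desL L (phi σ r t) =
      (DesL L σ).card - (if (r:ℕ) ∈ DesL L σ then 1 else 0) +
      (if t ∈ L then 1 else if (r:ℕ) < n then 1 else 0) := by
  set ρ := (r:ℕ) with hρ
  set A := (DesL L σ).filter (· < ρ) with hA
  set C0 := (DesL L σ).filter (fun d => ρ < d) with hC0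
  set C := C0.image (· + 1) with hC
  set B := (if t ∈ L then {ρ} else if ρ < n then {ρ+1} else (∅:Finset ℕ)) with hB
  have hmemA : ∀ x ∈ A, x < ρ := fun x hx => (mem_filter.mp hx).2
  have hmemC : ∀ x ∈ C, ρ + 2 ≤ x := by
    intro x hx
    obtain ⟨d, hd, hdx⟩ := mem_image.mp hx
    have := (mem_filter.mp hd).2
    omega
  have hmemB : ∀ x ∈ B, x = ρ ∨ x = ρ + 1 := by
    intro x hx
    rw [hB] at hx
    split_ifs at hx with h1 h2
    · exact Or.inl (Finset.mem_singleton.mp hx)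
    · exact Or.inr (Finset.mem_singleton.mp hx)
    · exact absurd hx (Finset.notMem_empty x)
  have hd1 : Disjoint A C := by
    rw [Finset.disjoint_left]
    intro x hx hx'
    have := hmemA x hx; have := hmemC x hx'; omega
  have hd2 : Disjoint (A ∪ C) B := by
    rw [Finset.disjoint_left]
    intro x hx hx'
    rcases hmemB x hx' with h | h <;> rcases mem_union.mp hx with h' | h' <;>
      first
      | (have := hmemA x h'; omega)
      | (have := hmemC x h'; omega)
  have hcard : desL L (phi σ r t) = A.card + C.card + B.card := by
    rw [desL, DesL_phi, ← hρ, ← hA, ← hC0, ← hC, ← hB,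
      Finset.card_union_of_disjoint hd2, Finset.card_union_of_disjoint hd1]
  have hCcard : C.card = C0.card := Finset.card_image_of_injective _ (add_left_injective 1)
  have hAC : A.card + C0.card = (DesL L σ).card - (if ρ ∈ DesL L σ then 1 else 0) := by
    have hu : A ∪ C0 = (DesL L σ).erase ρ := by
      rw [hA, hC0, ← Finset.filter_or]
      rw [← Finset.filter_ne' (DesL L σ) ρ]
      apply Finset.filter_congr
      intro x _
      omega
    have hdisj : Disjoint A C0 := by
      rw [Finset.disjoint_left]
      intro x hx hx'
      have := (mem_filter.mp hx).2; have := (mem_filter.mp hx').2; omega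
    have hthis := Finset.card_union_of_disjoint hdisj
    rw [hu] at hthis
    rw [← hthis]
    by_cases hmem : ρ ∈ DesL L σ
    · rw [Finset.card_erase_of_mem hmem, if_pos hmem]
    · rw [Finset.erase_eq_self.mpr hmem, if_neg hmem]; omega
  have hBcard : B.card = (if t ∈ L then 1 else if ρ < n then 1 else 0) := by
    rw [hB]
    by_cases h1 : t ∈ L
    · simp [h1]
    · by_cases h2 : ρ < n <;> simp [h1, h2]
  omega

/-- Insertion lemma, descent part: let `Des_L(σ) = {i_1 < ⋯ < i_s}` and let
`{i_{s+1} > ⋯ > i_{n+1}} = {0,…,n} \ Des_L(σ)` be the non-descents, from right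
to left (here `σ ∈ C_a ≀ S_n`, so `s = des_L(σ)` and the insertion produces an
element of `C_a ≀ S_{n+1}`). Then for `1 ≤ k ≤ n+1` and any color `t`,
`des_L(φ(σ, i_k, t))` equals `s` if `k < s+1`, or `k = s+1` and `t ∉ L`,
and equals `s+1` if `k > s+1`, or `k = s+1` and `t ∈ L`. -/
theorem desL_phi_insert {a n : ℕ} [NeZero a] (L : Finset (Fin a)) (σ : ColPerm a n)
    (s : ℕ) (hs : s = desL L σ) (k : ℕ) (hk1 : 1 ≤ k) (hk2 : k ≤ n + 1) (t : Fin a)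
    (ik : ℕ)
    (hik : ik = if k ≤ s then ((DesL L σ).sort (· ≤ ·)).getD (k - 1) 0
      else (((Finset.range (n + 1) \ DesL L σ).sort (· ≤ ·)).reverse).getD (k - s - 1) 0)
    (r : Fin (n + 1)) (hr : (r : ℕ) = ik) :
    desL L (phi σ r t) =
      if k < s + 1 ∨ (k = s + 1 ∧ t ∉ L) then s else s + 1 := by
  have hsub : DesL L σ ⊆ Finset.range n := Finset.filter_subset _ _
  have hcard := desL_phi_card L σ r t
  by_cases hks : k ≤ s
  · -- ρ = i_k is a descent
    rw [if_pos hks] at hik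
    set l := (DesL L σ).sort (· ≤ ·) with hl
    have hlen : l.length = s := by rw [hl, Finset.length_sort, hs, desL]
    have hidx : k - 1 < l.length := by omega
    have hget : l.getD (k-1) 0 = l.get ⟨k-1, hidx⟩ := List.getD_eq_get l 0 ⟨k-1, hidx⟩
    have hmem : (r:ℕ) ∈ DesL L σ := by
      rw [hr, hik, hget, ← Finset.mem_sort (α := ℕ) (· ≤ ·)]
      exact List.get_mem l _
    have hρn : (r:ℕ) < n := Finset.mem_range.mp (hsub hmem)
    have hsd : s = (DesL L σ).card := hs
    have hs1 : 1 ≤ (DesL L σ).card := Finset.card_pos.mpr ⟨_, hmem⟩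
    rw [if_pos (Or.inl (by omega))]
    rw [hcard, if_pos hmem]
    by_cases hL : t ∈ L
    · rw [if_pos hL]; omega
    · rw [if_neg hL, if_pos hρn]; omega
  · -- ρ = i_k is a non-descent
    rw [if_neg hks] at hik
    push_neg at hks
    set l := ((Finset.range (n + 1) \ DesL L σ).sort (· ≤ ·)).reverse with hl
    have hsub' : DesL L σ ⊆ Finset.range (n+1) :=
      hsub.trans (Finset.range_subset_range.mpr (by omega))
    have hlen : l.length = n + 1 - s := by
      rw [hl, List.length_reverse, Finset.length_sort, Finset.card_sdiff_of_subset hsub',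
        Finset.card_range, hs, desL] 
    have hidx : k - s - 1 < l.length := by omega
    have hget : l.getD (k-s-1) 0 = l.get ⟨k-s-1, hidx⟩ := List.getD_eq_get l 0 ⟨k-s-1, hidx⟩
    have hmem : (r:ℕ) ∈ Finset.range (n+1) \ DesL L σ := by
      rw [hr, hik, hget, ← Finset.mem_sort (α := ℕ) (· ≤ ·), ← List.mem_reverse, ← hl]
      exact List.get_mem l _
    have hρnotin : (r:ℕ) ∉ DesL L σ := (Finset.mem_sdiff.mp hmem).2
    have hρle : (r:ℕ) ≤ n := by
      have := Finset.mem_range.mp (Finset.mem_sdiff.mp hmem).1; omega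
    have hpw : l.Pairwise (· > ·) := by
      rw [hl, List.pairwise_reverse]
      exact (Finset.sortedLT_sort _).pairwise
    rw [hcard, if_neg hρnotin]
    by_cases hks1 : k = s + 1
    · -- ρ = n
      have hρ : (r:ℕ) = n := by
        have hidx0 : k - s - 1 = 0 := by omega
        have hnmem : n ∈ Finset.range (n+1) \ DesL L σ := by
          rw [Finset.mem_sdiff]
          refine ⟨Finset.mem_range.mpr (by omega), fun h => by
            have := Finset.mem_range.mp (hsub h); omega⟩
        have hnl : n ∈ l := by
          rw [hl, List.mem_reverse, Finset.mem_sort]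
          exact hnmem
        obtain ⟨j, hj⟩ := List.mem_iff_get.mp hnl
        rcases Nat.eq_zero_or_pos (j:ℕ) with hj0 | hj0
        · rw [hr, hik, hget]
          have : (⟨k-s-1, hidx⟩ : Fin l.length) = j := by
            ext; simp [hidx0]; omega
          rw [this, hj]
        · exfalso
          have hgt : l.get ⟨0, by omega⟩ > l.get j :=
            List.pairwise_iff_get.mp hpw ⟨0, by omega⟩ j (Fin.lt_def.mpr hj0)
          have hmem0 : l.get ⟨0, by omega⟩ ∈ Finset.range (n+1) \ DesL L σ := by
            rw [← Finset.mem_sort (α := ℕ) (· ≤ ·), ← List.mem_reverse, ← hl]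
            exact List.get_mem l _
          have := Finset.mem_range.mp (Finset.mem_sdiff.mp hmem0).1
          rw [hj] at hgt
          omega
      subst hks1
      have hsd : s = (DesL L σ).card := hs
      by_cases hL : t ∈ L
      · rw [if_pos hL, if_neg (by simp [hL])]
        omega
      · rw [if_neg hL, if_neg (by omega), if_pos (Or.inr ⟨rfl, hL⟩)]
        omega
    · -- k > s + 1, so ρ < n
      have hρn : (r:ℕ) < n := by
        have hgt : l.get ⟨0, by omega⟩ > l.get ⟨k-s-1, hidx⟩ :=
          List.pairwise_iff_get.mp hpw ⟨0, by omega⟩ ⟨k-s-1, hidx⟩ (by simp; omega)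
        have hmem0 : l.get ⟨0, by omega⟩ ∈ Finset.range (n+1) \ DesL L σ := by
          rw [← Finset.mem_sort (α := ℕ) (· ≤ ·), ← List.mem_reverse, ← hl]
          exact List.get_mem l _
        have h0n := Finset.mem_range.mp (Finset.mem_sdiff.mp hmem0).1
        have : (r:ℕ) = l.get ⟨k-s-1, hidx⟩ := by rw [hr, hik, hget]
        omega
      have hcond : ¬(k < s + 1 ∨ (k = s + 1 ∧ t ∉ L)) := by
        rintro (h | ⟨h, -⟩) <;> omega
      rw [if_neg hcond]
      have hsd : s = (DesL L σ).card := hs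
      by_cases hL : t ∈ L
      · rw [if_pos hL]; omega
      · rw [if_neg hL, if_pos hρn]; omega
end

section
/- With A_{a,L,n}(t,q) = Σ_{s≥0} t^s A_{a,L,n,s}(q) the generating polynomial of C_a ≀ S_n by (des_L, rmaj_{L,n}), the coefficients satisfy the recurrence A_{a,L,n,s}(q) = (a[s+1]_q − ℓ)·A_{a,L,n-1,s}(q) + (a q^s [n−s]_q + ℓ q^n)·A_{a,L,n-1,s-1}(q), where ℓ = |L|. -/
open Finset Polynomial
open scoped Classical

/-- `A_{a,L,n,s}(q) = Σ_{σ ∈ C_a≀S_n, des_L σ = s} q^{rmaj_{L,n} σ}`. -/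
noncomputable def AmajS (a n s : ℕ) [NeZero a] (L : Finset (Fin a)) : Polynomial ℚ :=
  ∑ σ ∈ Finset.univ.filter (fun σ : ColPerm a n => desL L σ = s), X ^ rmajL L σ

/-- insertion of the letter `α^t (m+1)` at (1-based) position `p+1`. -/
def ins {a m : ℕ} (σ : ColPerm a m) (t : Fin a) (p : Fin (m+1)) : ColPerm a (m+1) :=
  ((finSuccEquiv' p).trans ((Equiv.optionCongr σ.1).trans (finSuccEquiv' (Fin.last m)).symm),
   fun i => ((finSuccEquiv' p) i).elim t σ.2)

lemma ins_apply_self {a m : ℕ} (σ : ColPerm a m) (t : Fin a) (p : Fin (m+1)) :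
    (ins σ t p).1 p = Fin.last m := by
  simp [ins, finSuccEquiv'_at]

lemma ins_apply_succAbove {a m : ℕ} (σ : ColPerm a m) (t : Fin a) (p : Fin (m+1)) (j : Fin m) :
    (ins σ t p).1 (p.succAbove j) = (σ.1 j).castSucc := by
  simp only [ins, Equiv.trans_apply, finSuccEquiv'_succAbove, Equiv.optionCongr_apply,
    Option.map_some]
  exact finSuccEquiv'_symm_some_below (by simp [Fin.castSucc_lt_last])

lemma ins_color_self {a m : ℕ} (σ : ColPerm a m) (t : Fin a) (p : Fin (m+1)) :
    (ins σ t p).2 p = t := by simp [ins, finSuccEquiv'_at]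

lemma ins_color_succAbove {a m : ℕ} (σ : ColPerm a m) (t : Fin a) (p : Fin (m+1)) (j : Fin m) :
    (ins σ t p).2 (p.succAbove j) = σ.2 j := by simp [ins, finSuccEquiv'_succAbove]

lemma wval_ins {a m : ℕ} [NeZero a] (σ : ColPerm a m) (t : Fin a) (p : Fin (m+1)) (i : ℕ) :
    wval (ins σ t p) i =
      if i = p.val + 1 then (t, m + 1)
      else if i ≤ p.val then wval σ i
      else wval σ (i - 1) := by
  rcases Nat.lt_or_ge i 1 with hi | hi
  · interval_cases i
    simp [wval]
  rcases Nat.lt_or_ge (m+1) i with hbig | hle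
  · rw [wval]
    rw [dif_neg (by omega)]
    have hp := p.isLt
    rw [if_neg (by omega), if_neg (by omega), wval, dif_neg (by omega)]
  -- now 1 ≤ i ≤ m+1
  by_cases hip : i = p.val + 1
  · rw [if_pos hip, wval, dif_pos ⟨hi, hle⟩]
    have : (⟨i - 1, by omega⟩ : Fin (m+1)) = p := by
      ext; simp; omega
    rw [this, ins_apply_self, ins_color_self]
    simp [Fin.last]
  rw [if_neg hip]
  by_cases hlt : i ≤ p.val
  · rw [if_pos hlt, wval, dif_pos ⟨hi, hle⟩]
    have him : i ≤ m := by have := p.isLt; omega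
    have hj : i - 1 < m := by omega
    have : (⟨i - 1, by omega⟩ : Fin (m+1)) = p.succAbove ⟨i - 1, hj⟩ := by
      rw [Fin.succAbove_of_castSucc_lt _ _ (by simp [Fin.lt_def]; omega)]
      rfl
    rw [this, ins_apply_succAbove, ins_color_succAbove, wval, dif_pos ⟨hi, him⟩]
    simp
  · rw [if_neg hlt, wval, dif_pos ⟨hi, hle⟩]
    have h2 : p.val + 2 ≤ i := by omega
    have hj : i - 2 < m := by omega
    have : (⟨i - 1, by omega⟩ : Fin (m+1)) = p.succAbove ⟨i - 2, hj⟩ := by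
      rw [Fin.succAbove_of_le_castSucc _ _ (by simp [Fin.le_def]; omega)]
      ext; simp [Fin.succ]; omega
    rw [this, ins_apply_succAbove, ins_color_succAbove, wval, dif_pos ⟨by omega, by omega⟩]
    simp
    constructor <;> congr 1

lemma ins_injective {a m : ℕ} :
    Function.Injective (fun x : ColPerm a m × Fin a × Fin (m+1) => ins x.1 x.2.1 x.2.2) := by
  rintro ⟨σ, t, p⟩ ⟨σ', t', p'⟩ h
  simp only at h
  have hπ : (ins σ t p).1 = (ins σ' t' p').1 := by rw [h]
  have hc : (ins σ t p).2 = (ins σ' t' p').2 := by rw [h]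
  have hpp : p = p' := by
    have h1 : (ins σ t p).1 p = Fin.last m := ins_apply_self ..
    have h2 : (ins σ' t' p').1 p' = Fin.last m := ins_apply_self ..
    rw [hπ] at h1
    exact (ins σ' t' p').1.injective (h1.trans h2.symm)
  subst hpp
  have ht : t = t' := by
    have := congrFun hc p
    rwa [ins_color_self, ins_color_self] at this
  have hσ1 : σ.1 = σ'.1 := by
    ext j
    have : (ins σ t p).1 (p.succAbove j) = (ins σ' t' p).1 (p.succAbove j) := by rw [hπ]
    rw [ins_apply_succAbove, ins_apply_succAbove] at this
    exact congrArg Fin.val (Fin.castSucc_injective _ this)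
  have hσ2 : σ.2 = σ'.2 := by
    funext j
    have := congrFun hc (p.succAbove j)
    rwa [ins_color_succAbove, ins_color_succAbove] at this
  subst ht
  rw [Prod.ext_iff]
  exact ⟨Prod.ext hσ1 hσ2, rfl⟩

lemma ins_bijective {a m : ℕ} :
    Function.Bijective (fun x : ColPerm a m × Fin a × Fin (m+1) => ins x.1 x.2.1 x.2.2) := by
  rw [Fintype.bijective_iff_injective_and_card]
  refine ⟨ins_injective, ?_⟩
  simp [ColPerm, Fintype.card_prod, Fintype.card_perm, Fintype.card_fun, Nat.factorial]
  ring

lemma rkL_wval_bound {a m : ℕ} [NeZero a] (L : Finset (Fin a)) (σ : ColPerm a m) (i : ℕ) :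
    |rkL L (wval σ i)| < ((m+1) * a : ℤ) := by
  have ha : 1 ≤ a := Nat.one_le_iff_ne_zero.mpr (NeZero.ne a)
  rw [wval]
  split
  · next h =>
    set j := σ.1 ⟨i - 1, by omega⟩ with hj
    set c := σ.2 ⟨i - 1, by omega⟩ with hc
    have hjv : (j : ℕ) < m := j.isLt
    have hcv : (c : ℕ) < a := c.isLt
    rw [rkL]
    simp only [if_neg (Nat.succ_ne_zero _)]
    have hb : ((j:ℕ) + 1 : ℤ) * a + (c : ℤ) < (m+1) * a := by
      push_cast
      nlinarith [hjv, hcv, ha]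
    have hnn : (0:ℤ) ≤ ((j:ℕ) + 1 : ℤ) * a + (c : ℤ) := by positivity
    split <;> rw [abs_lt] <;> push_cast at * <;> constructor <;> nlinarith
  · simp [rkL]
    positivity

lemma rkL_ins_in {a m : ℕ} [NeZero a] (L : Finset (Fin a)) {t : Fin a} (ht : t ∈ L) :
    rkL L ((t, m + 1) : Fin a × ℕ) = -(((m+1) : ℤ) * a + t) := by
  simp [rkL, ht]

lemma rkL_ins_out {a m : ℕ} [NeZero a] (L : Finset (Fin a)) {t : Fin a} (ht : t ∉ L) :
    rkL L ((t, m + 1) : Fin a × ℕ) = ((m+1) : ℤ) * a + t := by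
  simp [rkL, ht]

lemma lt_rkL_ins_out {a m : ℕ} [NeZero a] (L : Finset (Fin a)) {t : Fin a} (ht : t ∉ L)
    (σ : ColPerm a m) (i : ℕ) : rkL L (wval σ i) < rkL L ((t, m + 1) : Fin a × ℕ) := by
  have := rkL_wval_bound L σ i
  rw [rkL_ins_out L ht]
  have : rkL L (wval σ i) < ((m+1) * a : ℤ) := (abs_lt.mp this).2
  have htn : (0:ℤ) ≤ (t : ℤ) := by positivity
  linarith

lemma rkL_ins_in_lt {a m : ℕ} [NeZero a] (L : Finset (Fin a)) {t : Fin a} (ht : t ∈ L)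
    (σ : ColPerm a m) (i : ℕ) : rkL L ((t, m + 1) : Fin a × ℕ) < rkL L (wval σ i) := by
  have h := rkL_wval_bound L σ i
  rw [rkL_ins_in L ht]
  have : -((m+1) * a : ℤ) < rkL L (wval σ i) := (abs_lt.mp h).1
  have htn : (0:ℤ) ≤ (t : ℤ) := by positivity
  linarith

lemma mem_DesL_ins_in {a m : ℕ} [NeZero a] (L : Finset (Fin a)) (σ : ColPerm a m)
    {t : Fin a} (ht : t ∈ L) (p : Fin (m+1)) (i : ℕ) :
    i ∈ DesL L (ins σ t p) ↔
      (i ∈ DesL L σ ∧ i < p.val) ∨ i = p.val ∨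
        (∃ j ∈ DesL L σ, p.val + 1 ≤ j ∧ j + 1 = i) := by
  have hp : p.val < m + 1 := p.isLt
  simp only [DesL, mem_filter, mem_range]
  rcases Nat.lt_or_ge i (m+1) with him | him
  swap
  · constructor
    · rintro ⟨h, -⟩; omega
    · rintro (⟨⟨h, -⟩, -⟩ | h | ⟨j, ⟨hj, -⟩, -, hj2⟩) <;> omega
  rcases Nat.lt_or_ge i p.val with hlt | hge
  · rw [wval_ins, wval_ins, if_neg (by omega), if_pos (by omega), if_neg (by omega),
      if_pos (by omega)]
    constructor
    · rintro ⟨-, hP⟩; exact Or.inl ⟨⟨by omega, hP⟩, hlt⟩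
    · rintro (⟨⟨-, hP⟩, -⟩ | h | ⟨j, ⟨hj, -⟩, hj1, hj2⟩)
      · exact ⟨him, hP⟩
      · omega
      · omega
  rcases Nat.eq_or_lt_of_le hge with heq | hgt
  · -- i = p.val
    rw [wval_ins, wval_ins, if_pos (by omega), if_neg (by omega), if_pos (by omega)]
    constructor
    · intro; right; left; omega
    · intro; exact ⟨him, rkL_ins_in_lt L ht σ i⟩
  rcases Nat.eq_or_lt_of_le hgt with heq | hgt2
  · -- i = p.val + 1
    rw [wval_ins, wval_ins, if_neg (by omega), if_neg (by omega), if_pos (by omega)]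
    constructor
    · rintro ⟨-, hP⟩
      exact absurd hP (not_lt.mpr (rkL_ins_in_lt L ht σ (i + 1 - 1)).le)
    · rintro (⟨-, h⟩ | h | ⟨j, -, hj1, hj2⟩) <;> omega
  · -- i ≥ p.val + 2
    rw [wval_ins, wval_ins, if_neg (by omega), if_neg (by omega), if_neg (by omega),
      if_neg (by omega)]
    have h1 : i + 1 - 1 = (i - 1) + 1 := by omega
    rw [h1]
    constructor
    · rintro ⟨-, hP⟩
      exact Or.inr (Or.inr ⟨i - 1, ⟨by omega, hP⟩, by omega, by omega⟩)
    · rintro (⟨-, h⟩ | h | ⟨j, ⟨hj, hP⟩, hj1, hj2⟩)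
      · omega
      · omega
      · have : j = i - 1 := by omega
        subst this
        exact ⟨him, hP⟩

lemma mem_DesL_ins_out {a m : ℕ} [NeZero a] (L : Finset (Fin a)) (σ : ColPerm a m)
    {t : Fin a} (ht : t ∉ L) (p : Fin (m+1)) (i : ℕ) :
    i ∈ DesL L (ins σ t p) ↔
      (i ∈ DesL L σ ∧ i < p.val) ∨ (i = p.val + 1 ∧ p.val < m) ∨
        (∃ j ∈ DesL L σ, p.val + 1 ≤ j ∧ j + 1 = i) := by
  have hp : p.val < m + 1 := p.isLt
  simp only [DesL, mem_filter, mem_range]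
  rcases Nat.lt_or_ge i (m+1) with him | him
  swap
  · constructor
    · rintro ⟨h, -⟩; omega
    · rintro (⟨⟨h, -⟩, -⟩ | h | ⟨j, ⟨hj, -⟩, -, hj2⟩) <;> omega
  rcases Nat.lt_or_ge i p.val with hlt | hge
  · rw [wval_ins, wval_ins, if_neg (by omega), if_pos (by omega), if_neg (by omega),
      if_pos (by omega)]
    constructor
    · rintro ⟨-, hP⟩; exact Or.inl ⟨⟨by omega, hP⟩, hlt⟩
    · rintro (⟨⟨-, hP⟩, -⟩ | h | ⟨j, ⟨hj, -⟩, hj1, hj2⟩)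
      · exact ⟨him, hP⟩
      · omega
      · omega
  rcases Nat.eq_or_lt_of_le hge with heq | hgt
  · -- i = p.val
    rw [wval_ins, wval_ins, if_pos (by omega), if_neg (by omega), if_pos (by omega)]
    constructor
    · rintro ⟨-, hP⟩
      exact absurd (lt_rkL_ins_out L ht σ i) (not_lt.mpr hP.le)
    · rintro (⟨-, h⟩ | ⟨h, -⟩ | ⟨j, -, hj1, hj2⟩) <;> omega
  rcases Nat.eq_or_lt_of_le hgt with heq | hgt2
  · -- i = p.val + 1 (and i < m+1, so p.val < m)
    rw [wval_ins, wval_ins, if_neg (by omega), if_neg (by omega), if_pos (by omega)]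
    constructor
    · intro; right; left; omega
    · intro; exact ⟨him, lt_rkL_ins_out L ht σ (i + 1 - 1)⟩
  · -- i ≥ p.val + 2
    rw [wval_ins, wval_ins, if_neg (by omega), if_neg (by omega), if_neg (by omega),
      if_neg (by omega)]
    have h1 : i + 1 - 1 = (i - 1) + 1 := by omega
    rw [h1]
    constructor
    · rintro ⟨-, hP⟩
      exact Or.inr (Or.inr ⟨i - 1, ⟨by omega, hP⟩, by omega, by omega⟩)
    · rintro (⟨-, h⟩ | ⟨h, -⟩ | ⟨j, ⟨hj, hP⟩, hj1, hj2⟩)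
      · omega
      · omega
      · have : j = i - 1 := by omega
        subst this
        exact ⟨him, hP⟩

lemma DesL_subset_range {a n : ℕ} [NeZero a] (L : Finset (Fin a)) (σ : ColPerm a n) :
    DesL L σ ⊆ Finset.range n := filter_subset _ _

lemma DesL_ins_in {a m : ℕ} [NeZero a] (L : Finset (Fin a)) (σ : ColPerm a m)
    {t : Fin a} (ht : t ∈ L) (p : Fin (m+1)) :
    DesL L (ins σ t p) =
      ((DesL L σ).filter (fun j => j < p.val) ∪ {p.val}) ∪
        ((DesL L σ).filter (fun j => p.val + 1 ≤ j)).image (· + 1) := by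
  ext i
  rw [mem_DesL_ins_in L σ ht p i]
  simp only [mem_union, mem_filter, mem_singleton, mem_image]
  constructor
  · rintro (⟨h1, h2⟩ | h | ⟨j, hj, hj1, hj2⟩)
    · exact Or.inl (Or.inl ⟨h1, h2⟩)
    · exact Or.inl (Or.inr h)
    · exact Or.inr ⟨j, ⟨hj, hj1⟩, hj2⟩
  · rintro ((⟨h1, h2⟩ | h) | ⟨j, ⟨hj, hj1⟩, hj2⟩)
    · exact Or.inl ⟨h1, h2⟩
    · exact Or.inr (Or.inl h)
    · exact Or.inr (Or.inr ⟨j, hj, hj1, hj2⟩)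

lemma DesL_ins_out {a m : ℕ} [NeZero a] (L : Finset (Fin a)) (σ : ColPerm a m)
    {t : Fin a} (ht : t ∉ L) (p : Fin (m+1)) :
    DesL L (ins σ t p) =
      ((DesL L σ).filter (fun j => j < p.val) ∪
          (if p.val < m then ({p.val + 1} : Finset ℕ) else ∅)) ∪
        ((DesL L σ).filter (fun j => p.val + 1 ≤ j)).image (· + 1) := by
  ext i
  rw [mem_DesL_ins_out L σ ht p i]
  simp only [mem_union, mem_filter, mem_singleton, mem_image]
  constructor
  · rintro (⟨h1, h2⟩ | ⟨h1, h2⟩ | ⟨j, hj, hj1, hj2⟩)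
    · exact Or.inl (Or.inl ⟨h1, h2⟩)
    · subst h1; rw [if_pos h2]; exact Or.inl (Or.inr (mem_singleton_self _))
    · exact Or.inr ⟨j, ⟨hj, hj1⟩, hj2⟩
  · rintro ((⟨h1, h2⟩ | h) | ⟨j, ⟨hj, hj1⟩, hj2⟩)
    · exact Or.inl ⟨h1, h2⟩
    · split at h
      · rw [mem_singleton] at h
        exact Or.inr (Or.inl ⟨h, by assumption⟩)
      · exact absurd h (notMem_empty i)
    · exact Or.inr (Or.inr ⟨j, hj, hj1, hj2⟩)

lemma filter_eq_aux (D : Finset ℕ) (p : ℕ) :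
    D.filter (fun j => ¬ j < p ∧ j = p) = if p ∈ D then {p} else ∅ := by
  ext x
  simp only [mem_filter]
  rcases em (p ∈ D) with hp | hp
  · rw [if_pos hp, mem_singleton]
    constructor
    · rintro ⟨-, -, h⟩; exact h
    · rintro rfl; exact ⟨hp, by omega, rfl⟩
  · rw [if_neg hp]
    simp only [notMem_empty, iff_false]
    rintro ⟨hx, -, rfl⟩
    exact hp hx

/-- splitting a finset of naturals at `p` -/
lemma card_split (D : Finset ℕ) (p : ℕ) :
    D.card = (D.filter (fun j => j < p)).card + (if p ∈ D then 1 else 0) +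
      (D.filter (fun j => p + 1 ≤ j)).card := by
  classical
  have h1 := Finset.card_filter_add_card_filter_not (s := D) (p := fun j => j < p)
  have h2 := Finset.card_filter_add_card_filter_not
    (s := D.filter (fun j => ¬ j < p)) (p := fun j => j = p)
  rw [filter_filter, filter_filter] at h2
  have e1 := filter_eq_aux D p
  have e2 : D.filter (fun j => ¬ j < p ∧ ¬ j = p) = D.filter (fun j => p + 1 ≤ j) := by
    apply filter_congr; intro x _; simp; omega
  rw [e1, e2] at h2
  rcases em (p ∈ D) with hp | hp
  · rw [if_pos hp] at h2 ⊢; rw [card_singleton] at h2; omega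
  · rw [if_neg hp] at h2 ⊢; rw [card_empty] at h2; omega

lemma sum_split (D : Finset ℕ) (p : ℕ) (f : ℕ → ℕ) :
    ∑ i ∈ D, f i = (∑ i ∈ D.filter (fun j => j < p), f i) + (if p ∈ D then f p else 0) +
      (∑ i ∈ D.filter (fun j => p + 1 ≤ j), f i) := by
  classical
  have h1 := Finset.sum_filter_add_sum_filter_not D (fun j => j < p) f
  have h2 := Finset.sum_filter_add_sum_filter_not (D.filter (fun j => ¬ j < p))
    (fun j => j = p) f
  rw [filter_filter, filter_filter] at h2
  have e1 := filter_eq_aux D p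
  have e2 : D.filter (fun j => ¬ j < p ∧ ¬ j = p) = D.filter (fun j => p + 1 ≤ j) := by
    apply filter_congr; intro x _; simp; omega
  rw [e1, e2] at h2
  rcases em (p ∈ D) with hp | hp
  · rw [if_pos hp] at h2 ⊢; rw [Finset.sum_singleton] at h2; omega
  · rw [if_neg hp] at h2 ⊢; rw [Finset.sum_empty] at h2; omega

section insStats
variable {a m : ℕ} [NeZero a] (L : Finset (Fin a)) (σ : ColPerm a m) (p : Fin (m+1))

lemma disj1 : Disjoint ((DesL L σ).filter (fun j => j < p.val)) ({p.val} : Finset ℕ) := by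
  rw [Finset.disjoint_left]
  intro x hx hx'
  rw [mem_filter] at hx
  rw [mem_singleton] at hx'
  omega

lemma disj1' : Disjoint ((DesL L σ).filter (fun j => j < p.val))
    (if p.val < m then ({p.val + 1} : Finset ℕ) else ∅) := by
  rw [Finset.disjoint_left]
  intro x hx hx'
  rw [mem_filter] at hx
  split at hx' <;> simp only [mem_singleton, notMem_empty] at hx' <;> omega

lemma disj2 (B : Finset ℕ) (hB : ∀ x ∈ B, x ≤ p.val + 1) :
    Disjoint B (((DesL L σ).filter (fun j => p.val + 1 ≤ j)).image (· + 1)) := by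
  rw [Finset.disjoint_left]
  intro x hx hx'
  simp only [mem_image, mem_filter] at hx'
  obtain ⟨j, ⟨-, hj⟩, rfl⟩ := hx'
  have := hB _ hx
  omega

lemma card_image_succ (E : Finset ℕ) : (E.image (· + 1)).card = E.card :=
  Finset.card_image_of_injective _ (fun x y h => by omega)

lemma desL_ins_in' {t : Fin a} (ht : t ∈ L) :
    desL L (ins σ t p) + (if p.val ∈ DesL L σ then 1 else 0) = desL L σ + 1 := by
  have hcs := card_split (DesL L σ) p.val
  rw [desL, DesL_ins_in L σ ht p, Finset.card_union_of_disjoint, Finset.card_union_of_disjoint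
      (disj1 L σ p), card_image_succ, card_singleton, desL]
  · omega
  · refine disj2 L σ p _ ?_
    intro x hx
    rw [mem_union, mem_filter, mem_singleton] at hx
    rcases hx with ⟨-, h⟩ | h <;> omega

lemma desL_ins_out' {t : Fin a} (ht : t ∉ L) :
    desL L (ins σ t p) + (if p.val ∈ DesL L σ then 1 else 0) =
      desL L σ + (if p.val < m then 1 else 0) := by
  have hcs := card_split (DesL L σ) p.val
  rw [desL, DesL_ins_out L σ ht p, Finset.card_union_of_disjoint, Finset.card_union_of_disjoint
      (disj1' L σ p), card_image_succ, desL]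
  · have hDp : p.val ∈ DesL L σ → p.val < m := fun h => by
      have := DesL_subset_range L σ h; rw [mem_range] at this; exact this
    rcases em (p.val < m) with h | h
    · rw [if_pos h, if_pos h, card_singleton]; omega
    · rw [if_neg h, if_neg h, card_empty]
      rcases em (p.val ∈ DesL L σ) with h2 | h2
      · exact absurd (hDp h2) h
      · rw [if_neg h2] at hcs ⊢; omega
  · refine disj2 L σ p _ ?_
    intro x hx
    rw [mem_union, mem_filter] at hx
    rcases hx with ⟨-, h⟩ | h
    · omega
    · split at h <;> simp only [mem_singleton, notMem_empty] at h <;> omega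

lemma sum_shift_aux :
    ∑ i ∈ ((DesL L σ).filter (fun j => p.val + 1 ≤ j)).image (· + 1), (m + 1 - i) =
      ∑ j ∈ (DesL L σ).filter (fun j => p.val + 1 ≤ j), (m - j) := by
  rw [Finset.sum_image (fun x _ y _ h => by omega)]
  refine Finset.sum_congr rfl (fun j hj => by omega)

lemma sum_low_aux :
    ∑ i ∈ (DesL L σ).filter (fun j => j < p.val), (m + 1 - i) =
      (∑ i ∈ (DesL L σ).filter (fun j => j < p.val), (m - i)) +
        ((DesL L σ).filter (fun j => j < p.val)).card := by
  have h1 : ∑ i ∈ (DesL L σ).filter (fun j => j < p.val), (m + 1 - i) =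
      ∑ i ∈ (DesL L σ).filter (fun j => j < p.val), ((m - i) + 1) := by
    refine Finset.sum_congr rfl (fun i hi => ?_)
    rw [mem_filter] at hi
    have := DesL_subset_range L σ hi.1
    rw [mem_range] at this
    omega
  rw [h1, Finset.sum_add_distrib, Finset.sum_const, smul_eq_mul, mul_one]

lemma rmajL_ins_in' {t : Fin a} (ht : t ∈ L) :
    rmajL L (ins σ t p) + (if p.val ∈ DesL L σ then (m - p.val) else 0) =
      rmajL L σ + ((DesL L σ).filter (fun j => j < p.val)).card + (m + 1 - p.val) := by
  have hss := sum_split (DesL L σ) p.val (fun i => m - i)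
  have hp : p.val < m + 1 := p.isLt
  rw [rmajL, DesL_ins_in L σ ht p, Finset.sum_union, Finset.sum_union (disj1 L σ p),
    Finset.sum_singleton, sum_shift_aux, sum_low_aux, rmajL]
  · have hDp : p.val ∈ DesL L σ → p.val < m := fun h => by
      have := DesL_subset_range L σ h; rw [mem_range] at this; exact this
    rcases em (p.val ∈ DesL L σ) with hmem | hmem
    · rw [if_pos hmem] at hss ⊢
      have := hDp hmem
      omega
    · rw [if_neg hmem] at hss ⊢
      omega
  · refine disj2 L σ p _ ?_
    intro x hx
    rw [mem_union, mem_filter, mem_singleton] at hx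
    rcases hx with ⟨-, h⟩ | h <;> omega

lemma rmajL_ins_out' {t : Fin a} (ht : t ∉ L) :
    rmajL L (ins σ t p) + (if p.val ∈ DesL L σ then (m - p.val) else 0) =
      rmajL L σ + ((DesL L σ).filter (fun j => j < p.val)).card +
        (if p.val < m then (m - p.val) else 0) := by
  have hss := sum_split (DesL L σ) p.val (fun i => m - i)
  have hp : p.val < m + 1 := p.isLt
  rw [rmajL, DesL_ins_out L σ ht p, Finset.sum_union, Finset.sum_union (disj1' L σ p),
    sum_shift_aux, sum_low_aux, rmajL]
  · have hmid : (∑ i ∈ (if p.val < m then ({p.val + 1} : Finset ℕ) else ∅), (m + 1 - i)) =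
        if p.val < m then (m - p.val) else 0 := by
      split
      · rw [Finset.sum_singleton]; omega
      · exact Finset.sum_empty
    rw [hmid]
    have hDp : p.val ∈ DesL L σ → p.val < m := fun h => by
      have := DesL_subset_range L σ h; rw [mem_range] at this; exact this
    rcases em (p.val ∈ DesL L σ) with hmem | hmem
    · rw [if_pos hmem] at hss ⊢
      have h2 := hDp hmem
      rw [if_pos h2]
      omega
    · rw [if_neg hmem] at hss ⊢
      rcases em (p.val < m) with h2 | h2
      · rw [if_pos h2]; omega
      · rw [if_neg h2]; omega
  · refine disj2 L σ p _ ?_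
    intro x hx
    rw [mem_union, mem_filter] at hx
    rcases hx with ⟨-, h⟩ | h
    · omega
    · split at h <;> simp only [mem_singleton, notMem_empty] at h <;> omega

end insStats

lemma sum_rank {M : Type*} [AddCommMonoid M] (D : Finset ℕ) (f : ℕ → M) :
    ∑ p ∈ D, f ((D.filter (fun j => j < p)).card) = ∑ k ∈ Finset.range D.card, f k := by
  induction D using Finset.induction_on_max with
  | empty => simp
  | insert b s hb ih =>
    have hbs : b ∉ s := fun h => absurd (hb b h) (lt_irrefl b)
    rw [Finset.sum_insert hbs, Finset.card_insert_of_notMem hbs, Finset.sum_range_succ]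
    have e1 : (insert b s).filter (fun j => j < b) = s := by
      ext x
      rw [mem_filter, mem_insert]
      constructor
      · rintro ⟨rfl | hx, h2⟩
        · omega
        · exact hx
      · intro hx
        exact ⟨Or.inr hx, hb x hx⟩
    have e2 : ∀ p ∈ s, (insert b s).filter (fun j => j < p) = s.filter (fun j => j < p) := by
      intro p hp
      ext x
      rw [mem_filter, mem_filter, mem_insert]
      constructor
      · rintro ⟨rfl | hx, h2⟩
        · exact absurd (hb p hp) (by omega)
        · exact ⟨hx, h2⟩
      · rintro ⟨hx, h2⟩
        exact ⟨Or.inr hx, h2⟩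
    rw [e1, Finset.sum_congr rfl (fun p hp => by rw [e2 p hp]), ih]
    exact add_comm _ _

lemma rank_compl_eq {m : ℕ} (D : Finset ℕ) (hD : D ⊆ Finset.range m) (v : ℕ)
    (hv : v < m + 1) :
    (D.filter (fun j => j < v)).card + (((Finset.range (m+1)) \ D).filter (fun j => j < v)).card
      = v := by
  classical
  have hunion : (D.filter (fun j => j < v)) ∪ (((Finset.range (m+1)) \ D).filter (fun j => j < v))
      = Finset.range v := by
    ext x
    simp only [mem_union, mem_filter, mem_sdiff, mem_range]
    constructor
    · rintro (⟨-, h⟩ | ⟨⟨-, -⟩, h⟩) <;> exact h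
    · intro hx
      rcases em (x ∈ D) with h | h
      · exact Or.inl ⟨h, hx⟩
      · exact Or.inr ⟨⟨by omega, h⟩, hx⟩
  have hdisj : Disjoint (D.filter (fun j => j < v))
      (((Finset.range (m+1)) \ D).filter (fun j => j < v)) := by
    rw [Finset.disjoint_left]
    intro x hx hx'
    rw [mem_filter] at hx
    rw [mem_filter, mem_sdiff] at hx'
    exact hx'.1.2 hx.1
  rw [← Finset.card_union_of_disjoint hdisj, hunion, Finset.card_range]

section valueForms
variable {a m : ℕ} [NeZero a] (L : Finset (Fin a)) (σ : ColPerm a m) (p : Fin (m+1))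

lemma mem_DesL_lt (v : ℕ) (hv : v ∈ DesL L σ) : v < m := by
  have := DesL_subset_range L σ hv; rwa [mem_range] at this

lemma desL_ins_in_eq {t : Fin a} (ht : t ∈ L) :
    desL L (ins σ t p) = if p.val ∈ DesL L σ then desL L σ else desL L σ + 1 := by
  have h := desL_ins_in' L σ p ht
  split at h <;> split <;> first | omega | simp_all

lemma desL_ins_out_eq {t : Fin a} (ht : t ∉ L) :
    desL L (ins σ t p) =
      if p.val ∈ DesL L σ ∨ p.val = m then desL L σ else desL L σ + 1 := by
  have h := desL_ins_out' L σ p ht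
  have hp : p.val < m + 1 := p.isLt
  rcases em (p.val ∈ DesL L σ) with h1 | h1
  · have h2 := mem_DesL_lt L σ _ h1
    rw [if_pos (Or.inl h1)]
    rw [if_pos h1, if_pos h2] at h
    omega
  · rw [if_neg h1] at h
    rcases em (p.val = m) with h2 | h2
    · rw [if_pos (Or.inr h2)]
      rw [if_neg (by omega)] at h
      omega
    · rw [if_neg (by tauto)]
      rw [if_pos (by omega)] at h
      omega

lemma rmajL_ins_in_eq {t : Fin a} (ht : t ∈ L) :
    rmajL L (ins σ t p) = rmajL L σ + ((DesL L σ).filter (fun j => j < p.val)).card +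
      (if p.val ∈ DesL L σ then 1 else m + 1 - p.val) := by
  have h := rmajL_ins_in' L σ p ht
  have hp : p.val < m + 1 := p.isLt
  rcases em (p.val ∈ DesL L σ) with h1 | h1
  · have h2 := mem_DesL_lt L σ _ h1
    rw [if_pos h1] at h ⊢
    omega
  · rw [if_neg h1] at h ⊢
    omega

lemma rmajL_ins_out_eq {t : Fin a} (ht : t ∉ L) :
    rmajL L (ins σ t p) = rmajL L σ + ((DesL L σ).filter (fun j => j < p.val)).card +
      (if p.val ∈ DesL L σ then 0 else m - p.val) := by
  have h := rmajL_ins_out' L σ p ht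
  have hp : p.val < m + 1 := p.isLt
  rcases em (p.val ∈ DesL L σ) with h1 | h1
  · have h2 := mem_DesL_lt L σ _ h1
    rw [if_pos h1] at h ⊢
    rw [if_pos h2] at h
    omega
  · rw [if_neg h1] at h ⊢
    rcases em (p.val < m) with h2 | h2
    · rw [if_pos h2] at h; omega
    · rw [if_neg h2] at h; omega

end valueForms

lemma geom_shift (r' s : ℕ) :
    ∑ k ∈ Finset.range s, (X : Polynomial ℚ) ^ (r' + k) =
      X ^ r' * ∑ j ∈ Finset.range s, X ^ j := by
  rw [Finset.mul_sum]
  exact Finset.sum_congr rfl fun k _ => pow_add X r' k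

lemma psum_out {a m : ℕ} [NeZero a] (L : Finset (Fin a)) (σ : ColPerm a m) {t : Fin a}
    (ht : t ∉ L) (s : ℕ) :
    ∑ p : Fin (m+1),
        (if desL L (ins σ t p) = s then (X : Polynomial ℚ) ^ rmajL L (ins σ t p) else 0) =
      (if desL L σ = s then X ^ rmajL L σ * ∑ j ∈ Finset.range (s+1), X ^ j else 0) +
      (if desL L σ + 1 = s then
        X ^ rmajL L σ * (X ^ s * ∑ j ∈ Finset.range (m + 1 - s), X ^ j) else 0) := by
  classical
  set D := DesL L σ with hDdef
  set s' := desL L σ with hs'def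
  set r' := rmajL L σ with hr'def
  set E := (Finset.range (m+1)) \ D with hEdef
  set F : ℕ → Polynomial ℚ := fun v =>
    if (if v ∈ D ∨ v = m then s' else s' + 1) = s
      then X ^ (r' + (D.filter (fun j => j < v)).card + (if v ∈ D then 0 else m - v)) else 0
    with hFdef
  have hstep : ∀ p : Fin (m+1),
      (if desL L (ins σ t p) = s then (X : Polynomial ℚ) ^ rmajL L (ins σ t p) else 0) =
        F p.val := by
    intro p
    rw [desL_ins_out_eq L σ p ht, rmajL_ins_out_eq L σ p ht]
  rw [Finset.sum_congr rfl (fun p _ => hstep p), Fin.sum_univ_eq_sum_range]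
  have hDlt : ∀ v ∈ D, v < m := fun v hv => mem_DesL_lt L σ v hv
  have hDsub : D ⊆ Finset.range (m+1) :=
    (DesL_subset_range L σ).trans (Finset.range_subset_range.mpr (by omega))
  have hcard : s' = D.card := rfl
  have hsm : s' ≤ m := by
    rw [hcard]
    calc D.card ≤ (Finset.range m).card := Finset.card_le_card (DesL_subset_range L σ)
    _ = m := Finset.card_range m
  have hmD : m ∉ D := fun h => absurd (hDlt m h) (lt_irrefl m)
  have hmE : m ∈ E := by
    rw [hEdef, mem_sdiff, mem_range]
    exact ⟨by omega, hmD⟩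
  have hEcard : E.card = m + 1 - s' := by
    rw [hEdef, Finset.card_sdiff_of_subset hDsub, Finset.card_range, hcard]
  have hkm : (D.filter (fun j => j < m)).card = s' := by
    rw [Finset.filter_true_of_mem hDlt, hcard]
  have hEmem : ∀ v ∈ E, v < m + 1 ∧ v ∉ D := by
    intro v hv; rw [hEdef, mem_sdiff, mem_range] at hv; exact hv
  rw [← Finset.sum_sdiff hDsub, ← hEdef]
  have hFD : ∀ v ∈ D, F v =
      if s' = s then X ^ (r' + (D.filter (fun j => j < v)).card) else 0 := by
    intro v hv
    simp only [hFdef]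
    rw [if_pos (Or.inl hv : v ∈ D ∨ v = m), if_pos hv, add_zero]
  have hFE : ∀ v ∈ E, v ≠ m → F v =
      if s' + 1 = s then X ^ (r' + (D.filter (fun j => j < v)).card + (m - v)) else 0 := by
    intro v hv hvm
    have h2 := hEmem v hv
    simp only [hFdef]
    rw [if_neg (not_or.mpr ⟨h2.2, hvm⟩ : ¬(v ∈ D ∨ v = m)), if_neg h2.2]
  have hFm : F m = if s' = s then X ^ (r' + s') else 0 := by
    simp only [hFdef]
    rw [if_neg hmD, if_pos (Or.inr trivial : m ∈ D ∨ True), hkm, Nat.sub_self, add_zero]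
  by_cases hs1 : s' = s
  · rw [if_pos hs1, if_neg (by omega), add_zero]
    have hDpart : ∑ v ∈ D, F v = ∑ k ∈ Finset.range s', X ^ (r' + k) := by
      rw [Finset.sum_congr rfl (fun v hv => by rw [hFD v hv, if_pos hs1]), hcard]
      exact sum_rank D (fun k => X ^ (r' + k))
    have hEpart : ∑ v ∈ E, F v = X ^ (r' + s') := by
      rw [Finset.sum_eq_single_of_mem m hmE
        (fun v hv hvm => by rw [hFE v hv hvm, if_neg (by omega)]), hFm, if_pos hs1]
    rw [hDpart, hEpart, hs1, add_comm,
      ← Finset.sum_range_succ (fun k => (X : Polynomial ℚ) ^ (r' + k)) s]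
    exact geom_shift r' (s+1)
  · rw [if_neg hs1]
    by_cases hs2 : s' + 1 = s
    · rw [if_pos hs2, zero_add]
      have hDpart : ∑ v ∈ D, F v = 0 :=
        Finset.sum_eq_zero (fun v hv => by rw [hFD v hv, if_neg hs1])
      have hEexp : ∀ v ∈ E, v ≠ m →
          F v = X ^ (r' + (m - (E.filter (fun j => j < v)).card)) := by
        intro v hv hvm
        have h2 := hEmem v hv
        have hrk := rank_compl_eq D (DesL_subset_range L σ) v h2.1
        rw [← hEdef] at hrk
        rw [hFE v hv hvm, if_pos hs2]
        congr 1
        omega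
      have hFm0 : F m = 0 := by rw [hFm, if_neg hs1]
      have hEpart : ∑ v ∈ E, F v =
          ∑ v ∈ E.erase m, X ^ (r' + (m - (E.filter (fun j => j < v)).card)) := by
        rw [← Finset.add_sum_erase E F hmE, hFm0, zero_add]
        exact Finset.sum_congr rfl (fun v hv =>
          hEexp v (Finset.mem_of_mem_erase hv) (Finset.ne_of_mem_erase hv))
      have hEm_term : (E.filter (fun j => j < m)).card = E.card - 1 := by
        have he : E.filter (fun j => j < m) = E.erase m := by
          ext x
          rw [mem_filter, Finset.mem_erase]
          constructor
          · rintro ⟨h1, h2⟩; exact ⟨by omega, h1⟩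
          · rintro ⟨h1, h2⟩
            have := (hEmem x h2).1
            exact ⟨h2, by omega⟩
        rw [he, Finset.card_erase_of_mem hmE]
      have hEfull : ∑ v ∈ E, (X : Polynomial ℚ) ^ (r' + (m - (E.filter (fun j => j < v)).card)) =
          ∑ k ∈ Finset.range (m + 1 - s'), X ^ (r' + (m - k)) := by
        rw [← hEcard]
        exact sum_rank E (fun k => X ^ (r' + (m - k)))
      have herase : ∑ v ∈ E.erase m, (X : Polynomial ℚ) ^ (r' + (m - (E.filter (fun j => j < v)).card)) =
          (∑ k ∈ Finset.range (m + 1 - s'), X ^ (r' + (m - k))) - X ^ (r' + s') := by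
        rw [← hEfull, ← Finset.add_sum_erase E
          (fun v => X ^ (r' + (m - (E.filter (fun j => j < v)).card))) hmE, hEm_term, hEcard]
        have h3 : m - (m + 1 - s' - 1) = s' := by omega
        rw [h3]
        ring
      rw [hDpart, add_zero, hEpart, herase]
      have hrefl : ∑ k ∈ Finset.range (m + 1 - s'), (X : Polynomial ℚ) ^ (r' + (m - k)) =
          ∑ j ∈ Finset.range (m + 1 - s'), X ^ (r' + s' + j) := by
        rw [← Finset.sum_range_reflect (fun j => (X : Polynomial ℚ) ^ (r' + s' + j)) (m + 1 - s')]
        refine Finset.sum_congr rfl (fun k hk => ?_)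
        rw [mem_range] at hk
        congr 1
        omega
      rw [hrefl]
      have hN : m + 1 - s' = (m - s') + 1 := by omega
      rw [hN, Finset.sum_range_succ' (fun j => (X : Polynomial ℚ) ^ (r' + s' + j)) (m - s')]
      rw [show r' + s' + 0 = r' + s' by omega, add_sub_cancel_right]
      rw [show m - s' = m + 1 - s by omega, Finset.mul_sum, Finset.mul_sum]
      refine Finset.sum_congr rfl (fun j hj => ?_)
      rw [← pow_add, ← pow_add]
      congr 1
      omega
    · rw [if_neg hs2, add_zero]
      rw [Finset.sum_eq_single_of_mem m hmE
        (fun v hv hvm => by rw [hFE v hv hvm, if_neg hs2]), hFm, if_neg hs1,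
        Finset.sum_eq_zero (fun v hv => by rw [hFD v hv, if_neg hs1]), add_zero]

lemma psum_in {a m : ℕ} [NeZero a] (L : Finset (Fin a)) (σ : ColPerm a m) {t : Fin a}
    (ht : t ∈ L) (s : ℕ) :
    ∑ p : Fin (m+1),
        (if desL L (ins σ t p) = s then (X : Polynomial ℚ) ^ rmajL L (ins σ t p) else 0) =
      (if desL L σ = s then
        X ^ rmajL L σ * ((∑ j ∈ Finset.range (s+1), X ^ j) - 1) else 0) +
      (if desL L σ + 1 = s then
        X ^ rmajL L σ * (X ^ s * (∑ j ∈ Finset.range (m + 1 - s), X ^ j) + X ^ (m+1))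
          else 0) := by
  classical
  set D := DesL L σ with hDdef
  set s' := desL L σ with hs'def
  set r' := rmajL L σ with hr'def
  set E := (Finset.range (m+1)) \ D with hEdef
  set F : ℕ → Polynomial ℚ := fun v =>
    if (if v ∈ D then s' else s' + 1) = s
      then X ^ (r' + (D.filter (fun j => j < v)).card + (if v ∈ D then 1 else m + 1 - v)) else 0
    with hFdef
  have hstep : ∀ p : Fin (m+1),
      (if desL L (ins σ t p) = s then (X : Polynomial ℚ) ^ rmajL L (ins σ t p) else 0) =
        F p.val := by
    intro p
    rw [desL_ins_in_eq L σ p ht, rmajL_ins_in_eq L σ p ht]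
  rw [Finset.sum_congr rfl (fun p _ => hstep p), Fin.sum_univ_eq_sum_range]
  have hDlt : ∀ v ∈ D, v < m := fun v hv => mem_DesL_lt L σ v hv
  have hDsub : D ⊆ Finset.range (m+1) :=
    (DesL_subset_range L σ).trans (Finset.range_subset_range.mpr (by omega))
  have hcard : s' = D.card := rfl
  have hsm : s' ≤ m := by
    rw [hcard]
    calc D.card ≤ (Finset.range m).card := Finset.card_le_card (DesL_subset_range L σ)
    _ = m := Finset.card_range m
  have hEcard : E.card = m + 1 - s' := by
    rw [hEdef, Finset.card_sdiff_of_subset hDsub, Finset.card_range, hcard]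
  have hEmem : ∀ v ∈ E, v < m + 1 ∧ v ∉ D := by
    intro v hv; rw [hEdef, mem_sdiff, mem_range] at hv; exact hv
  rw [← Finset.sum_sdiff hDsub, ← hEdef]
  have hFD : ∀ v ∈ D, F v =
      if s' = s then X ^ (r' + (D.filter (fun j => j < v)).card + 1) else 0 := by
    intro v hv
    simp only [hFdef]
    rw [if_pos hv, if_pos hv]
  have hFE : ∀ v ∈ E, F v =
      if s' + 1 = s then X ^ (r' + (D.filter (fun j => j < v)).card + (m + 1 - v)) else 0 := by
    intro v hv
    have h2 := hEmem v hv
    simp only [hFdef]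
    rw [if_neg h2.2, if_neg h2.2]
  by_cases hs1 : s' = s
  · rw [if_pos hs1, if_neg (by omega), add_zero]
    have hDpart : ∑ v ∈ D, F v = ∑ k ∈ Finset.range s', X ^ (r' + k + 1) := by
      rw [Finset.sum_congr rfl (fun v hv => by rw [hFD v hv, if_pos hs1]), hcard]
      exact sum_rank D (fun k => X ^ (r' + k + 1))
    have hEpart : ∑ v ∈ E, F v = 0 :=
      Finset.sum_eq_zero (fun v hv => by rw [hFE v hv, if_neg (by omega)])
    rw [hDpart, hEpart, zero_add, hs1]
    have h4 := Finset.sum_range_succ' (fun k => (X : Polynomial ℚ) ^ (r' + k)) s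
    have h5 : ∀ k, r' + (k + 1) = r' + k + 1 := fun k => by omega
    simp only [h5, add_zero] at h4
    rw [eq_sub_of_add_eq h4.symm, geom_shift r' (s+1), mul_sub, mul_one]
  · rw [if_neg hs1]
    by_cases hs2 : s' + 1 = s
    · rw [if_pos hs2, zero_add]
      have hDpart : ∑ v ∈ D, F v = 0 :=
        Finset.sum_eq_zero (fun v hv => by rw [hFD v hv, if_neg hs1])
      have hEexp : ∀ v ∈ E,
          F v = X ^ (r' + (m + 1 - (E.filter (fun j => j < v)).card)) := by
        intro v hv
        have h2 := hEmem v hv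
        have hrk := rank_compl_eq D (DesL_subset_range L σ) v h2.1
        rw [← hEdef] at hrk
        rw [hFE v hv, if_pos hs2]
        congr 1
        omega
      have hEpart : ∑ v ∈ E, F v =
          ∑ k ∈ Finset.range (m + 1 - s'), X ^ (r' + (m + 1 - k)) := by
        rw [Finset.sum_congr rfl (fun v hv => hEexp v hv), ← hEcard]
        exact sum_rank E (fun k => X ^ (r' + (m + 1 - k)))
      rw [hDpart, add_zero, hEpart]
      have hrefl : ∑ k ∈ Finset.range (m + 1 - s'), (X : Polynomial ℚ) ^ (r' + (m + 1 - k)) =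
          ∑ j ∈ Finset.range (m + 1 - s'), X ^ (r' + s + j) := by
        rw [← Finset.sum_range_reflect (fun j => (X : Polynomial ℚ) ^ (r' + s + j)) (m + 1 - s')]
        refine Finset.sum_congr rfl (fun k hk => ?_)
        rw [mem_range] at hk
        congr 1
        omega
      rw [hrefl, show m + 1 - s' = (m + 1 - s) + 1 by omega,
        Finset.sum_range_succ (fun j => (X : Polynomial ℚ) ^ (r' + s + j)) (m + 1 - s)]
      rw [mul_add, Finset.mul_sum, Finset.mul_sum]
      congr 1
      · refine Finset.sum_congr rfl (fun j hj => ?_)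
        rw [← pow_add, ← pow_add]
        congr 1
        omega
      · rw [← pow_add]
        congr 1
        omega
    · rw [if_neg hs2, add_zero,
        Finset.sum_eq_zero (fun v hv => by rw [hFE v hv, if_neg hs2]),
        Finset.sum_eq_zero (fun v hv => by rw [hFD v hv, if_neg hs1]), add_zero]

/-- The recurrence
`A_{a,L,n,s}(q) = (a[s+1]_q − ℓ) A_{a,L,n-1,s}(q) + (a q^s [n−s]_q + ℓ q^n) A_{a,L,n-1,s-1}(q)`
where `ℓ = |L|` (with the convention `A_{a,L,n-1,-1} = 0`). -/
theorem AmajS_recurrence (a n s : ℕ) [NeZero a] (L : Finset (Fin a)) (hn : 1 ≤ n) :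
    AmajS a n s L =
      ((a : Polynomial ℚ) * (∑ j ∈ Finset.range (s + 1), X ^ j) - (L.card : Polynomial ℚ)) *
          AmajS a (n - 1) s L +
      ((a : Polynomial ℚ) * X ^ s * (∑ j ∈ Finset.range (n - s), X ^ j) +
          (L.card : Polynomial ℚ) * X ^ n) *
        (if s = 0 then 0 else AmajS a (n - 1) (s - 1) L) := by
  classical
  obtain ⟨m, rfl⟩ : ∃ m, n = m + 1 := ⟨n - 1, by omega⟩
  simp only [Nat.add_sub_cancel]
  set A := AmajS a m s L with hA
  set B := (if s = 0 then 0 else AmajS a m (s - 1) L) with hB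
  set P1 : Polynomial ℚ := ∑ j ∈ Finset.range (s + 1), X ^ j with hP1
  set Q : Polynomial ℚ := ∑ j ∈ Finset.range (m + 1 - s), X ^ j with hQ
  -- rewrite the LHS as a sum over all colored permutations
  rw [AmajS, Finset.sum_filter,
    ← Function.Bijective.sum_comp (ins_bijective (a := a) (m := m))
      (fun σ => if desL L σ = s then (X : Polynomial ℚ) ^ rmajL L σ else 0),
    Fintype.sum_prod_type]
  -- per colored permutation of rank m, sum over color and position
  have hinner : ∀ σ' : ColPerm a m,
      (∑ y : Fin a × Fin (m+1),
        (if desL L (ins σ' y.1 y.2) = s then (X : Polynomial ℚ) ^ rmajL L (ins σ' y.1 y.2)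
          else 0)) =
      (L.card : Polynomial ℚ) *
          ((if desL L σ' = s then X ^ rmajL L σ' * (P1 - 1) else 0) +
           (if desL L σ' + 1 = s then X ^ rmajL L σ' * (X ^ s * Q + X ^ (m+1)) else 0)) +
        (((Finset.univ.filter (fun t : Fin a => t ∉ L)).card : Polynomial ℚ)) *
          ((if desL L σ' = s then X ^ rmajL L σ' * P1 else 0) +
           (if desL L σ' + 1 = s then X ^ rmajL L σ' * (X ^ s * Q) else 0)) := by
    intro σ'
    rw [Fintype.sum_prod_type]
    have hts : ∀ t : Fin a,
        (∑ p : Fin (m+1),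
          (if desL L (ins σ' t p) = s then (X : Polynomial ℚ) ^ rmajL L (ins σ' t p) else 0)) =
        if t ∈ L then
          ((if desL L σ' = s then X ^ rmajL L σ' * (P1 - 1) else 0) +
           (if desL L σ' + 1 = s then X ^ rmajL L σ' * (X ^ s * Q + X ^ (m+1)) else 0))
        else
          ((if desL L σ' = s then X ^ rmajL L σ' * P1 else 0) +
           (if desL L σ' + 1 = s then X ^ rmajL L σ' * (X ^ s * Q) else 0)) := by
      intro t
      by_cases ht : t ∈ L
      · rw [if_pos ht, psum_in L σ' ht s]
      · rw [if_neg ht, psum_out L σ' ht s]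
    rw [Finset.sum_congr rfl (fun t _ => hts t), Finset.sum_ite, Finset.sum_const,
      Finset.sum_const, nsmul_eq_mul, nsmul_eq_mul]
    congr 2
    have : Finset.univ.filter (fun t : Fin a => t ∈ L) = L := by
      ext t; simp
    rw [this]
  rw [Finset.sum_congr rfl (fun σ' _ => hinner σ')]
  set c := (Finset.univ.filter (fun t : Fin a => t ∉ L)).card with hc
  have hac : ((L.card : Polynomial ℚ)) + (c : Polynomial ℚ) = (a : Polynomial ℚ) := by
    have h1 := Finset.card_filter_add_card_filter_not
      (s := (Finset.univ : Finset (Fin a))) (p := fun t => t ∈ L)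
    have h2 : Finset.univ.filter (fun t : Fin a => t ∈ L) = L := by ext t; simp
    rw [h2, Finset.card_univ, Fintype.card_fin] at h1
    rw [← hc] at h1
    rw [← Nat.cast_add]
    exact congrArg (Nat.cast : ℕ → Polynomial ℚ) h1
  have hpoint : ∀ σ' : ColPerm a m,
      ((L.card : Polynomial ℚ) *
          ((if desL L σ' = s then X ^ rmajL L σ' * (P1 - 1) else 0) +
           (if desL L σ' + 1 = s then X ^ rmajL L σ' * (X ^ s * Q + X ^ (m+1)) else 0)) +
        ((c : ℕ) : Polynomial ℚ) *
          ((if desL L σ' = s then X ^ rmajL L σ' * P1 else 0) +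
           (if desL L σ' + 1 = s then X ^ rmajL L σ' * (X ^ s * Q) else 0))) =
      (if desL L σ' = s then (X : Polynomial ℚ) ^ rmajL L σ' else 0) *
          ((L.card : Polynomial ℚ) * (P1 - 1) + (c : Polynomial ℚ) * P1) +
        (if desL L σ' + 1 = s then (X : Polynomial ℚ) ^ rmajL L σ' else 0) *
          ((L.card : Polynomial ℚ) * (X ^ s * Q + X ^ (m+1)) + (c : Polynomial ℚ) * (X ^ s * Q)) := by
    intro σ'
    split_ifs <;> ring
  rw [Finset.sum_congr rfl (fun σ' _ => hpoint σ'), Finset.sum_add_distrib,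
    ← Finset.sum_mul, ← Finset.sum_mul]
  have hAeq : (∑ σ' : ColPerm a m, if desL L σ' = s then (X : Polynomial ℚ) ^ rmajL L σ' else 0)
      = A := by
    rw [hA, AmajS, Finset.sum_filter]
  have hBeq : (∑ σ' : ColPerm a m,
      if desL L σ' + 1 = s then (X : Polynomial ℚ) ^ rmajL L σ' else 0) = B := by
    rw [hB]
    by_cases hs : s = 0
    · rw [if_pos hs]
      exact Finset.sum_eq_zero (fun σ' _ => by rw [if_neg (by omega)])
    · rw [if_neg hs, AmajS, Finset.sum_filter]
      refine Finset.sum_congr rfl (fun σ' _ => ?_)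
      refine if_congr ?_ rfl rfl
      omega
  rw [hAeq, hBeq]
  have hceq : (c : Polynomial ℚ) = (a : Polynomial ℚ) - (L.card : Polynomial ℚ) := by
    rw [← hac]; ring
  rw [hceq]
  ring
end

section
/- The Euler-Mahonian polynomials satisfy the functional recurrence (1−q)·A_{a,ℓ,n}(t,q) = (a − (1−q)ℓ)(1 − t q^n)·A_{a,ℓ,n-1}(t,q) − a q (1−t)·A_{a,ℓ,n-1}(tq, q) for all integers n > 0, a > 0, 0 ≤ ℓ ≤ a. -/
open Finset Polynomial
open scoped Classical

/-- The two-variable generating polynomial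
`A_{a,L,n}(t,q) = Σ_{σ ∈ C_a≀S_n} t^{des_L σ} q^{rmaj_{L,n} σ}`, with `t` the outer
variable and `q` the inner variable. -/
noncomputable def Amaj (a n : ℕ) [NeZero a] (L : Finset (Fin a)) :
    Polynomial (Polynomial ℚ) :=
  ∑ σ : ColPerm a n, Polynomial.C ((X : Polynomial ℚ) ^ rmajL L σ) * X ^ desL L σ

namespace AmajAux

variable {a m : ℕ} [NeZero a]

/-- descent predicate -/
def dd {n : ℕ} [NeZero a] (L : Finset (Fin a)) (τ : ColPerm a n) (i : ℕ) : Prop :=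
  rkL L (wval τ (i + 1)) < rkL L (wval τ i)

lemma DesL_eq {n : ℕ} (L : Finset (Fin a)) (τ : ColPerm a n) :
    DesL L τ = (range n).filter (dd L τ) := by
  ext i; simp [DesL, dd]

/-- insertion of the letter with absolute value `m+1` and color `c` at (0-based) position `P` -/
def ins (τ : ColPerm a m) (c : Fin a) (P : Fin (m+1)) : ColPerm a (m+1) :=
  ((finSuccEquiv' P).trans ((Equiv.optionCongr τ.1).trans (finSuccEquiv' (Fin.last m)).symm),
   fun i => ((finSuccEquiv' P) i).elim c τ.2)

lemma ins_perm_self (τ : ColPerm a m) (c : Fin a) (P : Fin (m+1)) :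
    (ins τ c P).1 P = Fin.last m := by
  simp [ins, finSuccEquiv'_at, finSuccEquiv'_symm_none]

lemma ins_perm_succAbove (τ : ColPerm a m) (c : Fin a) (P : Fin (m+1)) (j : Fin m) :
    (ins τ c P).1 (P.succAbove j) = (τ.1 j).castSucc := by
  simp [ins, finSuccEquiv'_succAbove, finSuccEquiv'_symm_some, Fin.succAbove_last]

lemma ins_col_self (τ : ColPerm a m) (c : Fin a) (P : Fin (m+1)) :
    (ins τ c P).2 P = c := by
  simp [ins, finSuccEquiv'_at]

lemma ins_col_succAbove (τ : ColPerm a m) (c : Fin a) (P : Fin (m+1)) (j : Fin m) :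
    (ins τ c P).2 (P.succAbove j) = τ.2 j := by
  simp [ins, finSuccEquiv'_succAbove]

lemma wval_pos {n : ℕ} (σ : ColPerm a n) {i : ℕ} (h1 : 1 ≤ i) (h2 : i ≤ n) (hi : i - 1 < n) :
    wval σ i = (σ.2 ⟨i-1, hi⟩, (σ.1 ⟨i-1, hi⟩ : ℕ) + 1) := dif_pos ⟨h1, h2⟩

lemma wval_out {n : ℕ} (σ : ColPerm a n) {i : ℕ} (h : ¬ (1 ≤ i ∧ i ≤ n)) :
    wval σ i = (0, 0) := dif_neg h

lemma wval_ins_le (τ : ColPerm a m) (c : Fin a) (P : Fin (m+1)) {i : ℕ} (hi : i ≤ (P : ℕ)) :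
    wval (ins τ c P) i = wval τ i := by
  rcases Nat.eq_zero_or_pos i with rfl | h1
  · rw [wval_out _ (by omega), wval_out _ (by omega)]
  · have hP : (P:ℕ) ≤ m := Nat.lt_succ_iff.mp P.isLt
    have hi1 : i - 1 < m := by omega
    rw [wval_pos _ h1 (by omega) (by omega), wval_pos _ h1 (by omega) hi1]
    have hs : P.succAbove ⟨i-1, hi1⟩ = ⟨i-1, by omega⟩ := by
      rw [Fin.succAbove_of_castSucc_lt]
      · rfl
      · simp only [Fin.lt_def, Fin.coe_castSucc]; omega
    rw [← hs, ins_perm_succAbove, ins_col_succAbove]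
    simp

lemma wval_ins_self (τ : ColPerm a m) (c : Fin a) (P : Fin (m+1)) :
    wval (ins τ c P) ((P : ℕ) + 1) = (c, m+1) := by
  have hP : (P:ℕ) ≤ m := Nat.lt_succ_iff.mp P.isLt
  rw [wval_pos _ (by omega) (by omega) (by omega)]
  have hPP : (⟨(P:ℕ)+1-1, by omega⟩ : Fin (m+1)) = P := by ext; simp
  rw [hPP, ins_perm_self, ins_col_self]
  simp [Fin.val_last]

lemma wval_ins_ge (τ : ColPerm a m) (c : Fin a) (P : Fin (m+1)) {i : ℕ}
    (hi : (P : ℕ) + 2 ≤ i) :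
    wval (ins τ c P) i = wval τ (i - 1) := by
  have hP : (P:ℕ) ≤ m := Nat.lt_succ_iff.mp P.isLt
  by_cases h2 : i ≤ m + 1
  · have h1 : 1 ≤ i := by omega
    have hj : i - 2 < m := by omega
    rw [wval_pos _ h1 h2 (by omega), wval_pos _ (by omega) (by omega) (show i-1-1 < m by omega)]
    have hs : P.succAbove ⟨i-2, hj⟩ = ⟨i-1, by omega⟩ := by
      rw [Fin.succAbove_of_le_castSucc]
      · ext; simp; omega
      · simp only [Fin.le_def, Fin.coe_castSucc]; omega
    rw [← hs, ins_perm_succAbove, ins_col_succAbove]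
    simp only [Prod.mk.injEq, Fin.coe_castSucc]
    have he : (⟨i - 2, hj⟩ : Fin m) = ⟨i - 1 - 1, by omega⟩ := Fin.ext (by simp; omega)
    rw [he]
    exact ⟨rfl, rfl⟩
  · rw [wval_out _ (by omega), wval_out _ (by omega)]

lemma rk_bound (L : Finset (Fin a)) (τ : ColPerm a m) (i : ℕ) :
    -((m : ℤ) * a + a) < rkL L (wval τ i) ∧ rkL L (wval τ i) < (m : ℤ) * a + a := by
  have ha : (1:ℤ) ≤ a := by exact_mod_cast Nat.one_le_iff_ne_zero.mpr (NeZero.ne a)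
  have key : ∀ x : Fin a × ℕ, x.2 ≤ m →
      -((m : ℤ) * a + a) < rkL L x ∧ rkL L x < (m : ℤ) * a + a := by
    intro x hx
    have hc : ((x.1 : ℕ) : ℤ) < a := by exact_mod_cast x.1.isLt
    have hc0 : (0:ℤ) ≤ ((x.1 : ℕ) : ℤ) := Int.natCast_nonneg _
    have hv : ((x.2 : ℕ) : ℤ) ≤ m := by exact_mod_cast hx
    have hv0 : (0:ℤ) ≤ ((x.2 : ℕ) : ℤ) := Int.natCast_nonneg _
    have hmul : ((x.2 : ℕ) : ℤ) * a ≤ (m:ℤ) * a :=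
      mul_le_mul_of_nonneg_right hv (by linarith)
    unfold rkL
    split_ifs <;> constructor <;> nlinarith
  unfold wval
  split
  · next h => exact key _ (by simp)
  · exact key (0,0) (by simp)

lemma rk_new (L : Finset (Fin a)) (c : Fin a) :
    rkL L ((c, m+1) : Fin a × ℕ) =
      if c ∈ L then -(((m:ℤ)+1) * a + c) else ((m:ℤ)+1) * a + c := by
  have h : ((c, m+1) : Fin a × ℕ).2 ≠ 0 := by simp
  rw [rkL, if_neg h]
  split_ifs <;> push_cast <;> ring

lemma dd_ins_lt (L : Finset (Fin a)) (τ : ColPerm a m) (c : Fin a) (P : Fin (m+1)) {i : ℕ}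
    (hi : i + 1 ≤ (P : ℕ)) : dd L (ins τ c P) i ↔ dd L τ i := by
  rw [dd, dd, wval_ins_le _ _ _ (by omega), wval_ins_le _ _ _ (by omega)]

lemma dd_ins_self (L : Finset (Fin a)) (τ : ColPerm a m) (c : Fin a) (P : Fin (m+1)) :
    dd L (ins τ c P) (P : ℕ) ↔ c ∈ L := by
  rw [dd, wval_ins_self, wval_ins_le _ _ _ (le_refl _), rk_new]
  obtain ⟨hb1, hb2⟩ := rk_bound L τ P
  have hc : (0:ℤ) ≤ (c:ℤ) := Int.natCast_nonneg _
  have hexp : ((m:ℤ)+1)*a = m*a + a := by ring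
  split_ifs with h
  · simp only [h, iff_true]; linarith
  · simp only [h, iff_false, not_lt]; linarith

lemma dd_ins_next (L : Finset (Fin a)) (τ : ColPerm a m) (c : Fin a) (P : Fin (m+1)) :
    dd L (ins τ c P) ((P : ℕ) + 1) ↔ c ∉ L := by
  rw [dd, wval_ins_ge _ _ _ (by omega), show (P:ℕ)+1+1-1 = (P:ℕ)+1 from rfl,
    wval_ins_self, rk_new]
  obtain ⟨hb1, hb2⟩ := rk_bound L τ ((P:ℕ)+1)
  have hc : (0:ℤ) ≤ (c:ℤ) := Int.natCast_nonneg _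
  have hexp : ((m:ℤ)+1)*a = m*a + a := by ring
  split_ifs with h
  · simp only [h, not_true, iff_false, not_lt]; linarith
  · simp only [h, not_false_iff, iff_true]; linarith

lemma dd_ins_gt (L : Finset (Fin a)) (τ : ColPerm a m) (c : Fin a) (P : Fin (m+1)) {i : ℕ}
    (hi : (P : ℕ) + 2 ≤ i) : dd L (ins τ c P) i ↔ dd L τ (i - 1) := by
  rw [dd, dd, wval_ins_ge _ _ _ (by omega), wval_ins_ge _ _ _ hi,
    show i+1-1 = i from rfl, show i-1+1 = i by omega]


section Counting

variable (L : Finset (Fin a))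

noncomputable def Acnt (τ : ColPerm a m) (p : ℕ) : ℕ := ((range p).filter (dd L τ)).card
noncomputable def Bcnt (τ : ColPerm a m) (p : ℕ) : ℕ := ((Ico (p+1) m).filter (dd L τ)).card
noncomputable def SAs (τ : ColPerm a m) (p : ℕ) : ℕ := ∑ i ∈ (range p).filter (dd L τ), (m - i)
noncomputable def SBs (τ : ColPerm a m) (p : ℕ) : ℕ := ∑ i ∈ (Ico (p+1) m).filter (dd L τ), (m - i)
noncomputable def dpi (τ : ColPerm a m) (p : ℕ) : ℕ := if p < m ∧ dd L τ p then 1 else 0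
noncomputable def fins (τ : ColPerm a m) (p : ℕ) : ℕ := Acnt L τ p + (1 - dpi L τ p) * (m - p)
noncomputable def eL (c : Fin a) : ℕ := if c ∈ L then 1 else 0

lemma sum_split {M : Type*} [AddCommMonoid M] (g : ℕ → M) {p n : ℕ} (h : p ≤ n) :
    ∑ i ∈ range n, g i =
      (∑ i ∈ range p, g i) + ((if p < n then g p else 0) + ∑ i ∈ Ico (p+1) n, g i) := by
  rcases eq_or_lt_of_le h with rfl | hlt
  · rw [if_neg (lt_irrefl p), Ico_eq_empty (by omega)]
    simp
  · rw [if_pos hlt, ← Finset.sum_eq_sum_Ico_succ_bot hlt g, range_eq_Ico, range_eq_Ico]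
    exact (Finset.sum_Ico_consecutive g (Nat.zero_le p) h).symm

lemma sum_Ico_split {M : Type*} [AddCommMonoid M] (g : ℕ → M) {u v : ℕ} (h : u ≤ v) :
    ∑ i ∈ Ico u v, g i = (if u < v then g u else 0) + ∑ i ∈ Ico (u+1) v, g i := by
  rcases eq_or_lt_of_le h with rfl | hlt
  · rw [if_neg (lt_irrefl u), Ico_eq_empty (by omega), Ico_eq_empty (by omega)]; simp
  · rw [if_pos hlt, Finset.sum_eq_sum_Ico_succ_bot hlt]

lemma sum_Ico_shift {M : Type*} [AddCommMonoid M] (g : ℕ → M) (u v : ℕ) :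
    ∑ i ∈ Ico (u+1) (v+1), g i = ∑ j ∈ Ico u v, g (j+1) := by
  rw [Finset.sum_Ico_eq_sum_range, Finset.sum_Ico_eq_sum_range,
    show v + 1 - (u+1) = v - u by omega]
  exact Finset.sum_congr rfl fun i _ => by congr 1; omega

lemma des_tau_split (τ : ColPerm a m) {p : ℕ} (hp : p ≤ m) :
    desL L τ = Acnt L τ p + (dpi L τ p + Bcnt L τ p) := by
  rw [desL, DesL_eq, Finset.card_filter, sum_split _ hp, Acnt, Bcnt, dpi,
    Finset.card_filter, Finset.card_filter]
  congr 1
  congr 1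
  split_ifs <;> simp_all

lemma rmaj_tau_split (τ : ColPerm a m) {p : ℕ} (hp : p ≤ m) :
    rmajL L τ = SAs L τ p + (dpi L τ p * (m - p) + SBs L τ p) := by
  rw [rmajL, DesL_eq, Finset.sum_filter, sum_split _ hp, SAs, SBs, dpi,
    Finset.sum_filter, Finset.sum_filter]
  congr 1
  congr 1
  split_ifs <;> simp_all

lemma des_ins_split (τ : ColPerm a m) (c : Fin a) (P : Fin (m+1)) :
    desL L (ins τ c P) =
      Acnt L τ P + (eL L c + ((1 - eL L c) * (if (P:ℕ) < m then 1 else 0) + Bcnt L τ P)) := by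
  have hp : (P:ℕ) ≤ m := Nat.lt_succ_iff.mp P.isLt
  rw [desL, DesL_eq, Finset.card_filter, sum_split _ (show (P:ℕ) ≤ m+1 by omega)]
  congr 1
  · rw [Acnt, Finset.card_filter]
    exact Finset.sum_congr rfl fun i hi => by
      rw [mem_range] at hi
      rw [dd_ins_lt L τ c P (by omega)]
  congr 1
  · rw [if_pos (by omega), dd_ins_self L τ c P, eL]
    rcases Classical.em (c ∈ L) with h | h <;> simp [h]
  · rw [sum_Ico_split _ (by omega), sum_Ico_shift]
    congr 1
    · by_cases hm : (P:ℕ) < m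
      · rw [if_pos (by omega), if_pos hm, dd_ins_next L τ c P, eL]
        rcases Classical.em (c ∈ L) with h | h <;> simp [h]
      · rw [if_neg (by omega), if_neg hm]
        simp
    · rw [Bcnt, Finset.card_filter]
      exact Finset.sum_congr rfl fun j hj => by
        rw [mem_Ico] at hj
        rw [dd_ins_gt L τ c P (show (P:ℕ)+2 ≤ j+1 by omega), show j+1-1 = j from rfl]

lemma rmaj_ins_split (τ : ColPerm a m) (c : Fin a) (P : Fin (m+1)) :
    rmajL L (ins τ c P) =
      (SAs L τ P + Acnt L τ P) +
        (eL L c * (m + 1 - P) + ((1 - eL L c) * (m - P) + SBs L τ P)) := by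
  have hp : (P:ℕ) ≤ m := Nat.lt_succ_iff.mp P.isLt
  rw [rmajL, DesL_eq, Finset.sum_filter, sum_split _ (show (P:ℕ) ≤ m+1 by omega)]
  congr 1
  · have : ∀ i ∈ range (P:ℕ),
        (if dd L (ins τ c P) i then (m+1-i) else 0)
          = (if dd L τ i then (m-i) else 0) + (if dd L τ i then 1 else 0) := by
      intro i hi
      rw [mem_range] at hi
      rw [dd_ins_lt L τ c P (by omega)]
      split_ifs <;> omega
    rw [Finset.sum_congr rfl this, Finset.sum_add_distrib, SAs, Acnt,
      Finset.sum_filter, Finset.card_filter]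
  congr 1
  · rw [if_pos (by omega), dd_ins_self L τ c P, eL]
    rcases Classical.em (c ∈ L) with h | h <;> simp [h]
  · rw [sum_Ico_split _ (by omega), sum_Ico_shift]
    congr 1
    · by_cases hm : (P:ℕ) < m
      · rw [if_pos (by omega), dd_ins_next L τ c P, eL]
        rcases Classical.em (c ∈ L) with h | h <;> simp [h] <;> omega
      · rw [if_neg (by omega)]
        have : m - (P:ℕ) = 0 := by omega
        simp [this]
    · rw [SBs, Finset.sum_filter]
      exact Finset.sum_congr rfl fun j hj => by
        rw [mem_Ico] at hj
        rw [dd_ins_gt L τ c P (show (P:ℕ)+2 ≤ j+1 by omega), show j+1-1 = j from rfl,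
          show m+1-(j+1) = m - j by omega]

end Counting


section Stats

variable (L : Finset (Fin a))

lemma eL_le_one (c : Fin a) : eL L c ≤ 1 := by rw [eL]; split_ifs <;> omega

lemma dpi_le_one (τ : ColPerm a m) (p : ℕ) : dpi L τ p ≤ 1 := by
  rw [dpi]; split_ifs <;> omega

lemma Acnt_le (τ : ColPerm a m) (p : ℕ) : Acnt L τ p ≤ p :=
  le_trans (Finset.card_filter_le _ _) (by simp)

lemma Bcnt_le (τ : ColPerm a m) (p : ℕ) : Bcnt L τ p ≤ m - (p+1) :=
  le_trans (Finset.card_filter_le _ _) (by simp [Nat.card_Ico])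

lemma rmaj_ins (τ : ColPerm a m) (c : Fin a) (P : Fin (m+1)) :
    rmajL L (ins τ c P) = rmajL L τ + (eL L c + fins L τ P) := by
  have hp : (P:ℕ) ≤ m := Nat.lt_succ_iff.mp P.isLt
  rw [rmaj_ins_split, rmaj_tau_split L τ hp, fins]
  have he := eL_le_one L c
  have hd := dpi_le_one L τ (P:ℕ)
  rcases Nat.le_one_iff_eq_zero_or_eq_one.mp he with h1 | h1 <;>
    rcases Nat.le_one_iff_eq_zero_or_eq_one.mp hd with h2 | h2 <;>
    rw [h1, h2] <;>
    simp only [Nat.sub_zero, Nat.sub_self, one_mul, zero_mul, mul_zero, mul_one] <;>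
    omega

lemma des_ins (τ : ColPerm a m) (c : Fin a) (P : Fin (m+1)) :
    desL L (ins τ c P) = desL L τ +
      (if (if c ∈ L then desL L τ else desL L τ + 1) ≤ fins L τ P then 1 else 0) := by
  have hp : (P:ℕ) ≤ m := Nat.lt_succ_iff.mp P.isLt
  have hB := Bcnt_le L τ (P:ℕ)
  have hs := des_tau_split L τ hp
  rw [des_ins_split, fins]
  have hdd : dpi L τ (P:ℕ) = 1 ∨ (dpi L τ (P:ℕ) = 0 ∧ ¬((P:ℕ) < m ∧ dd L τ (P:ℕ))) := by
    rw [dpi]; split_ifs with h; exacts [Or.inl rfl, Or.inr ⟨rfl, h⟩]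
  have hdm : dpi L τ (P:ℕ) = 1 → (P:ℕ) < m := by
    rw [dpi]; split_ifs with h; exacts [fun _ => h.1, by simp]
  rcases Classical.em (c ∈ L) with hcL | hcL
  · have he : eL L c = 1 := if_pos hcL
    rw [if_pos hcL, he]
    rcases hdd with h1 | ⟨h1, h2⟩
    · rw [h1, if_pos (hdm h1)]
      rw [h1] at hs
      split_ifs with h <;> omega
    · rw [h1]
      rw [h1] at hs
      by_cases hm : (P:ℕ) < m
      · rw [if_pos hm]
        split_ifs with h <;> omega
      · rw [if_neg hm]
        split_ifs with h <;> omega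
  · have he : eL L c = 0 := if_neg hcL
    rw [if_neg hcL, he]
    rcases hdd with h1 | ⟨h1, h2⟩
    · rw [h1, if_pos (hdm h1)]
      rw [h1] at hs
      split_ifs with h <;> omega
    · rw [h1]
      rw [h1] at hs
      by_cases hm : (P:ℕ) < m
      · rw [if_pos hm]
        split_ifs with h <;> omega
      · rw [if_neg hm]
        split_ifs with h <;> omega

lemma fins_le (τ : ColPerm a m) {p : ℕ} (hp : p ≤ m) : fins L τ p ≤ m := by
  have hA := Acnt_le L τ p
  have hd := dpi_le_one L τ p
  rw [fins]
  rcases Nat.le_one_iff_eq_zero_or_eq_one.mp hd with h | h <;> rw [h] <;>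
    simp only [Nat.sub_zero, Nat.sub_self, one_mul, zero_mul] <;> omega

lemma Acnt_add (τ : ColPerm a m) {p1 p2 : ℕ} (h : p1 ≤ p2) :
    Acnt L τ p2 = Acnt L τ p1 + ((Ico p1 p2).filter (dd L τ)).card := by
  rw [Acnt, Acnt, range_eq_Ico, range_eq_Ico,
    ← Finset.Ico_union_Ico_eq_Ico (Nat.zero_le p1) h, filter_union,
    card_union_of_disjoint (disjoint_filter_filter (Finset.Ico_disjoint_Ico_consecutive 0 p1 p2))]

lemma fins_lt_ne (τ : ColPerm a m) {p1 p2 : ℕ} (h12 : p1 < p2) (h2m : p2 ≤ m) :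
    fins L τ p1 ≠ fins L τ p2 := by
  have h1m : p1 ≤ m := by omega
  have hs1 := des_tau_split L τ h1m
  have hs2 := des_tau_split L τ h2m
  have hB1 := Bcnt_le L τ p1
  have hB2 := Bcnt_le L τ p2
  have hAdd := Acnt_add L τ (le_of_lt h12)
  set C := ((Ico p1 p2).filter (dd L τ)).card with hC
  have hCle : C ≤ p2 - p1 := le_trans (Finset.card_filter_le _ _) (by simp [Nat.card_Ico])
  rw [fins, fins]
  by_cases hd1 : p1 < m ∧ dd L τ p1
  · have e1 : dpi L τ p1 = 1 := if_pos hd1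
    have hCge : 1 ≤ C := by
      rw [hC]
      refine Finset.card_pos.mpr ⟨p1, ?_⟩
      rw [mem_filter, mem_Ico]
      exact ⟨⟨le_refl p1, h12⟩, hd1.2⟩
    by_cases hd2 : p2 < m ∧ dd L τ p2
    · have e2 : dpi L τ p2 = 1 := if_pos hd2
      simp only [e1, e2, Nat.sub_self, zero_mul] at hs1 hs2 ⊢
      omega
    · have e2 : dpi L τ p2 = 0 := if_neg hd2
      simp only [e1, e2, Nat.sub_self, zero_mul, Nat.sub_zero, one_mul] at hs1 hs2 ⊢
      omega
  · have e1 : dpi L τ p1 = 0 := if_neg hd1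
    have hnd1 : ¬ dd L τ p1 := fun h => hd1 ⟨by omega, h⟩
    have hCle' : C ≤ p2 - p1 - 1 := by
      have hsub : (Ico p1 p2).filter (dd L τ) ⊆ (Ico p1 p2).erase p1 := by
        intro x hx
        rw [mem_filter] at hx
        rw [mem_erase]
        exact ⟨fun hxp => hnd1 (hxp ▸ hx.2), hx.1⟩
      calc C ≤ ((Ico p1 p2).erase p1).card := Finset.card_le_card hsub
        _ = p2 - p1 - 1 := by rw [Finset.card_erase_of_mem (by rw [mem_Ico]; omega), Nat.card_Ico]
    by_cases hd2 : p2 < m ∧ dd L τ p2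
    · have e2 : dpi L τ p2 = 1 := if_pos hd2
      simp only [e1, e2, Nat.sub_self, zero_mul, Nat.sub_zero, one_mul] at hs1 hs2 ⊢
      omega
    · have e2 : dpi L τ p2 = 0 := if_neg hd2
      simp only [e1, e2, Nat.sub_zero, one_mul] at hs1 hs2 ⊢
      omega

lemma fins_image (τ : ColPerm a m) : (range (m+1)).image (fins L τ) = range (m+1) := by
  have hinj : Set.InjOn (fins L τ) ↑(range (m+1)) := by
    intro p1 h1 p2 h2 heq
    simp only [coe_range, Set.mem_Iio] at h1 h2
    by_contra hne
    rcases Nat.lt_or_ge p1 p2 with h | h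
    · exact fins_lt_ne L τ h (by omega) heq
    · exact fins_lt_ne L τ (show p2 < p1 by omega) (by omega) heq.symm
  apply Finset.eq_of_subset_of_card_le
  · intro x hx
    rw [mem_image] at hx
    obtain ⟨p, hp, rfl⟩ := hx
    rw [mem_range] at hp ⊢
    have := fins_le L τ (show p ≤ m by omega)
    omega
  · exact le_of_eq (Finset.card_image_of_injOn hinj).symm

end Stats


section Bij

lemma ins_injective :
    Function.Injective (fun x : ColPerm a m × Fin a × Fin (m+1) => ins x.1 x.2.1 x.2.2) := by
  rintro ⟨τ, c, P⟩ ⟨τ', c', P'⟩ h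
  simp only at h
  have hP : P = P' := by
    by_contra hne
    obtain ⟨j, hj⟩ := Fin.exists_succAbove_eq (show P ≠ P' from hne)
    have h1 : (ins τ c P).1 P = Fin.last m := ins_perm_self τ c P
    have h2 : (ins τ' c' P').1 P = (τ'.1 j).castSucc := by rw [← hj, ins_perm_succAbove]
    rw [h] at h1
    rw [h1] at h2
    exact absurd h2.symm (ne_of_lt (Fin.castSucc_lt_last _))
  subst hP
  have hc : c = c' := by
    have := congrArg (fun σ : ColPerm a (m+1) => σ.2 P) h
    simpa [ins_col_self] using this
  have hτ1 : τ.1 = τ'.1 := by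
    apply Equiv.ext
    intro j
    have := congrArg (fun σ : ColPerm a (m+1) => σ.1 (P.succAbove j)) h
    simp only [ins_perm_succAbove] at this
    exact Fin.castSucc_injective m this
  have hτ2 : τ.2 = τ'.2 := by
    funext j
    have := congrArg (fun σ : ColPerm a (m+1) => σ.2 (P.succAbove j)) h
    simpa [ins_col_succAbove] using this
  have hττ : τ = τ' := Prod.ext hτ1 hτ2
  rw [hττ, hc]

lemma ins_bijective :
    Function.Bijective (fun x : ColPerm a m × Fin a × Fin (m+1) => ins x.1 x.2.1 x.2.2) := by
  rw [Fintype.bijective_iff_injective_and_card]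
  refine ⟨ins_injective, ?_⟩
  simp only [Fintype.card_prod, Fintype.card_perm, Fintype.card_fun, Fintype.card_fin,
    Nat.factorial_succ, pow_succ]
  ring

end Bij

section Poly

variable (L : Finset (Fin a))

lemma fins_inj_pair (τ : ColPerm a m) :
    ∀ x ∈ range (m+1), ∀ y ∈ range (m+1), fins L τ x = fins L τ y → x = y := by
  intro x hx y hy heq
  rw [mem_range] at hx hy
  by_contra hne
  rcases Nat.lt_or_ge x y with h | h
  · exact fins_lt_ne L τ h (by omega) heq
  · exact fins_lt_ne L τ (show y < x by omega) (by omega) heq.symm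

lemma sum_P (τ : ColPerm a m) (c : Fin a) :
    (∑ P : Fin (m+1),
        Polynomial.C ((X : Polynomial ℚ) ^ rmajL L (ins τ c P)) * X ^ desL L (ins τ c P))
      = ∑ Δ ∈ range (m+1),
          Polynomial.C ((X : Polynomial ℚ) ^ (rmajL L τ + (eL L c + Δ))) *
            X ^ (desL L τ + if (if c ∈ L then desL L τ else desL L τ + 1) ≤ Δ then 1 else 0) := by
  have h1 : ∀ P : Fin (m+1),
      Polynomial.C ((X : Polynomial ℚ) ^ rmajL L (ins τ c P)) * X ^ desL L (ins τ c P)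
        = (fun p : ℕ =>
            Polynomial.C ((X : Polynomial ℚ) ^ (rmajL L τ + (eL L c + fins L τ p))) *
            X ^ (desL L τ +
              if (if c ∈ L then desL L τ else desL L τ + 1) ≤ fins L τ p then 1 else 0)) (P : ℕ) := by
    intro P
    simp only
    rw [rmaj_ins, des_ins]
  rw [Finset.sum_congr rfl (fun P _ => h1 P), Fin.sum_univ_eq_sum_range (fun p : ℕ =>
    Polynomial.C ((X : Polynomial ℚ) ^ (rmajL L τ + (eL L c + fins L τ p))) *
      (X : Polynomial (Polynomial ℚ)) ^ (desL L τ +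
        if (if c ∈ L then desL L τ else desL L τ + 1) ≤ fins L τ p then 1 else 0)) (m+1)]
  have h2 := Finset.sum_image (s := range (m+1)) (g := fins L τ)
    (f := fun Δ => Polynomial.C ((X : Polynomial ℚ) ^ (rmajL L τ + (eL L c + Δ))) *
      (X : Polynomial (Polynomial ℚ)) ^ (desL L τ +
        if (if c ∈ L then desL L τ else desL L τ + 1) ≤ Δ then 1 else 0))
    (fins_inj_pair L τ)
  rw [fins_image] at h2
  exact h2.symm

lemma sum_theta (u s θ : ℕ) (hθ : θ ≤ m+1) :
    (∑ Δ ∈ range (m+1), Polynomial.C ((X : Polynomial ℚ) ^ (u + Δ)) *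
        (X : Polynomial (Polynomial ℚ)) ^ (s + if θ ≤ Δ then 1 else 0))
    = Polynomial.C ((X : Polynomial ℚ) ^ u) *
        ((∑ Δ ∈ range θ, Polynomial.C ((X : Polynomial ℚ) ^ Δ)) * X ^ s
          + (∑ Δ ∈ Ico θ (m+1), Polynomial.C ((X : Polynomial ℚ) ^ Δ)) * X ^ (s+1)) := by
  have hsplit : ∀ g : ℕ → Polynomial (Polynomial ℚ), ∑ Δ ∈ range (m+1), g Δ
      = (∑ Δ ∈ range θ, g Δ) + ∑ Δ ∈ Ico θ (m+1), g Δ := by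
    intro g
    rw [range_eq_Ico, range_eq_Ico, ← Finset.sum_Ico_consecutive g (Nat.zero_le θ) hθ]
  rw [hsplit, mul_add, Finset.sum_mul, Finset.sum_mul, Finset.mul_sum, Finset.mul_sum]
  refine congrArg₂ (· + ·) ?_ ?_
  · refine Finset.sum_congr rfl fun Δ hΔ => ?_
    rw [mem_range] at hΔ
    rw [if_neg (by omega), pow_add, map_mul]
    ring
  · refine Finset.sum_congr rfl fun Δ hΔ => ?_
    rw [mem_Ico] at hΔ
    rw [if_pos hΔ.1, pow_add, map_mul]
    ring

lemma sum_colors {M : Type*} [AddCommMonoid M] (Y Z : M) :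
    ∑ c : Fin a, (if c ∈ L then Y else Z) = L.card • Y + (a - L.card) • Z := by
  rw [Finset.sum_ite, Finset.sum_const, Finset.sum_const]
  have h1 : (univ.filter (fun c : Fin a => c ∈ L)) = L := by
    ext c; simp
  have h2 : (univ.filter (fun c : Fin a => c ∈ L)).card
      + (univ.filter (fun c : Fin a => ¬ c ∈ L)).card = a := by
    rw [Finset.card_filter_add_card_filter_not]
    simp
  rw [h1] at h2 ⊢
  have h3 : (univ.filter (fun c : Fin a => ¬ c ∈ L)).card = a - L.card := by omega
  rw [h3]

lemma des_le (τ : ColPerm a m) : desL L τ ≤ m := by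
  rw [desL, DesL_eq]
  exact le_trans (Finset.card_filter_le _ _) (by simp)

lemma per_tau (hl : L.card ≤ a) (τ : ColPerm a m) :
    Polynomial.C (1 - (X : Polynomial ℚ)) *
      ∑ c : Fin a, ∑ P : Fin (m+1),
        Polynomial.C ((X : Polynomial ℚ) ^ rmajL L (ins τ c P)) * X ^ desL L (ins τ c P)
    = Polynomial.C ((a : Polynomial ℚ) - (1 - X) * (L.card : Polynomial ℚ)) *
          (1 - Polynomial.C ((X : Polynomial ℚ) ^ (m+1)) * X) *
          (Polynomial.C ((X : Polynomial ℚ) ^ rmajL L τ) * X ^ desL L τ) -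
      Polynomial.C ((a : Polynomial ℚ) * X) * (1 - X) *
          (Polynomial.C ((X : Polynomial ℚ) ^ (rmajL L τ + desL L τ)) * X ^ desL L τ) := by
  have hs : desL L τ ≤ m := des_le L τ
  have hcL : ∀ c : Fin a,
      (∑ P : Fin (m+1),
        Polynomial.C ((X : Polynomial ℚ) ^ rmajL L (ins τ c P)) * X ^ desL L (ins τ c P))
      = if c ∈ L
        then Polynomial.C ((X : Polynomial ℚ) ^ (rmajL L τ + 1)) *
            ((∑ Δ ∈ range (desL L τ), Polynomial.C ((X : Polynomial ℚ) ^ Δ)) * X ^ desL L τ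
              + (∑ Δ ∈ Ico (desL L τ) (m+1), Polynomial.C ((X : Polynomial ℚ) ^ Δ)) *
                  X ^ (desL L τ + 1))
        else Polynomial.C ((X : Polynomial ℚ) ^ rmajL L τ) *
            ((∑ Δ ∈ range (desL L τ + 1), Polynomial.C ((X : Polynomial ℚ) ^ Δ)) * X ^ desL L τ
              + (∑ Δ ∈ Ico (desL L τ + 1) (m+1), Polynomial.C ((X : Polynomial ℚ) ^ Δ)) *
                  X ^ (desL L τ + 1)) := by
    intro c
    rcases Classical.em (c ∈ L) with hc | hc
    · rw [sum_P, if_pos hc, if_pos hc]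
      have he : eL L c = 1 := if_pos hc
      have h4 : ∀ Δ ∈ range (m+1),
          Polynomial.C ((X : Polynomial ℚ) ^ (rmajL L τ + (eL L c + Δ))) *
            (X : Polynomial (Polynomial ℚ)) ^ (desL L τ + if desL L τ ≤ Δ then 1 else 0)
          = Polynomial.C ((X : Polynomial ℚ) ^ ((rmajL L τ + 1) + Δ)) *
              X ^ (desL L τ + if desL L τ ≤ Δ then 1 else 0) := by
        intro Δ _
        rw [he, show rmajL L τ + (1 + Δ) = (rmajL L τ + 1) + Δ by omega]
      rw [Finset.sum_congr rfl h4, sum_theta _ _ _ (by omega)]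
    · rw [sum_P, if_neg hc, if_neg hc]
      have he : eL L c = 0 := if_neg hc
      have h4 : ∀ Δ ∈ range (m+1),
          Polynomial.C ((X : Polynomial ℚ) ^ (rmajL L τ + (eL L c + Δ))) *
            (X : Polynomial (Polynomial ℚ)) ^ (desL L τ + if desL L τ + 1 ≤ Δ then 1 else 0)
          = Polynomial.C ((X : Polynomial ℚ) ^ (rmajL L τ + Δ)) *
              X ^ (desL L τ + if desL L τ + 1 ≤ Δ then 1 else 0) := by
        intro Δ _
        rw [he, show rmajL L τ + (0 + Δ) = rmajL L τ + Δ by omega]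
      rw [Finset.sum_congr rfl h4, sum_theta _ _ _ (by omega)]
  rw [Finset.sum_congr rfl (fun c _ => hcL c), sum_colors]
  rw [nsmul_eq_mul, nsmul_eq_mul, Nat.cast_sub hl]
  rw [Finset.sum_Ico_eq_sub _ (show desL L τ ≤ m+1 by omega),
    Finset.sum_Ico_eq_sub _ (show desL L τ + 1 ≤ m+1 by omega)]
  simp only [map_pow, map_sub, map_mul, map_one, map_natCast]
  set q : Polynomial (Polynomial ℚ) := Polynomial.C Polynomial.X with hq
  set t : Polynomial (Polynomial ℚ) := Polynomial.X with ht
  set s := desL L τ with hsdef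
  set r := rmajL L τ with hrdef
  set lc : Polynomial (Polynomial ℚ) := ((L.card : ℕ) : Polynomial (Polynomial ℚ)) with hlc
  set ac : Polynomial (Polynomial ℚ) := ((a : ℕ) : Polynomial (Polynomial ℚ)) with hac
  have G : ∀ k : ℕ, (1 - q) * ∑ i ∈ Finset.range k, q ^ i = 1 - q ^ k := fun k => by
    linear_combination -geom_sum_mul q k
  linear_combination (lc * q^(r+1) * (t^s - t^(s+1))) * G s
    + ((ac - lc) * q^r * (t^s - t^(s+1))) * G (s+1)
    + ((lc * q^(r+1) + (ac - lc) * q^r) * t^(s+1)) * G (m+1)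

end Poly

end AmajAux

/-- The functional recurrence
`(1−q) A_{a,ℓ,n}(t,q) = (a − (1−q)ℓ)(1 − t qⁿ) A_{a,ℓ,n-1}(t,q) − a q (1−t) A_{a,ℓ,n-1}(tq,q)`
for `n > 0`; here `t` is the outer variable, `q` the inner one, `ℓ = |L|`, and
substituting `tq` for `t` is polynomial composition in the outer variable. -/
theorem Amaj_functional_recurrence (a n : ℕ) [NeZero a] (L : Finset (Fin a)) (hn : 1 ≤ n) :
    Polynomial.C (1 - (X : Polynomial ℚ)) * Amaj a n L =
      Polynomial.C ((a : Polynomial ℚ) - (1 - X) * (L.card : Polynomial ℚ)) *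
          (1 - Polynomial.C ((X : Polynomial ℚ) ^ n) * X) * Amaj a (n - 1) L -
      Polynomial.C ((a : Polynomial ℚ) * X) * (1 - X) *
          (Amaj a (n - 1) L).comp (Polynomial.C (X : Polynomial ℚ) * X) := by
  obtain ⟨m, rfl⟩ : ∃ m, n = m + 1 := ⟨n - 1, by omega⟩
  have hl : L.card ≤ a := by simpa using Finset.card_le_univ L
  simp only [Nat.add_sub_cancel]
  have hA : Amaj a (m+1) L = ∑ τ : ColPerm a m, ∑ c : Fin a, ∑ P : Fin (m+1),
      Polynomial.C ((X : Polynomial ℚ) ^ rmajL L (AmajAux.ins τ c P)) *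
        X ^ desL L (AmajAux.ins τ c P) := by
    rw [Amaj, ← Fintype.sum_bijective _ AmajAux.ins_bijective
      (fun x : ColPerm a m × Fin a × Fin (m+1) =>
        Polynomial.C ((X : Polynomial ℚ) ^ rmajL L (AmajAux.ins x.1 x.2.1 x.2.2)) *
          X ^ desL L (AmajAux.ins x.1 x.2.1 x.2.2))
      (fun σ => Polynomial.C ((X : Polynomial ℚ) ^ rmajL L σ) * X ^ desL L σ)
      (fun x => rfl)]
    rw [Fintype.sum_prod_type]
    exact Finset.sum_congr rfl fun τ _ => Fintype.sum_prod_type _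
  have hcomp : (Amaj a m L).comp (Polynomial.C (X : Polynomial ℚ) * X)
      = ∑ τ : ColPerm a m,
        Polynomial.C ((X : Polynomial ℚ) ^ (rmajL L τ + desL L τ)) * X ^ desL L τ := by
    rw [Amaj]
    have hstep : (∑ σ : ColPerm a m,
          Polynomial.C ((X : Polynomial ℚ) ^ rmajL L σ) * X ^ desL L σ).comp
            (Polynomial.C (X : Polynomial ℚ) * X)
        = ∑ σ : ColPerm a m,
            (Polynomial.C ((X : Polynomial ℚ) ^ rmajL L σ) * X ^ desL L σ).comp
              (Polynomial.C (X : Polynomial ℚ) * X) := by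
      simp [Polynomial.comp, Polynomial.eval₂_finset_sum]
    rw [hstep]
    refine Finset.sum_congr rfl fun τ _ => ?_
    rw [Polynomial.mul_comp, Polynomial.C_comp, Polynomial.pow_comp, Polynomial.X_comp,
      mul_pow, ← map_pow, ← mul_assoc, ← map_mul, ← pow_add]
  rw [hA, hcomp, Amaj, Finset.mul_sum, Finset.mul_sum, Finset.mul_sum,
    ← Finset.sum_sub_distrib]
  exact Finset.sum_congr rfl fun τ _ => AmajAux.per_tau L hl τ
end

section
/- Generalized Carlitz quotient formula: for all integers n > 0, a > 0, 0 ≤ ℓ ≤ a, one has the formal power series identity A_{a,ℓ,n}(t,q) / ((1−t)(1−tq)⋯(1−tq^n)) = Σ_{s≥0} t^s (a[s+1]_q − ℓ)^n in the ring of formal power series in t over ℚ(q) (equivalently, A_{a,ℓ,n}(t,q) = (t;q)_{n+1} · Σ_{s≥0} t^s (a[s+1]_q − ℓ)^n). -/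
open Finset Polynomial
open scoped Classical

namespace CarlitzAux

/-- the set of allowed (color, height) digits -/
def Dset (a : ℕ) (L : Finset (Fin a)) (s : ℕ) : Finset (Fin a × ℕ) :=
  (Finset.univ ×ˢ Finset.range (s+1)).filter (fun x => ¬(x.1 ∈ L ∧ x.2 = 0))

/-- monotone tuples with entries ≤ r -/
def MonoSet (n r : ℕ) : Finset (Fin n → ℕ) :=
  (Fintype.piFinset fun _ => Finset.range (r+1)).filter Monotone

noncomputable def Kp (n r : ℕ) : Polynomial ℚ := ∑ f ∈ MonoSet n r, X ^ (∑ i, f i)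

section rk
variable {a : ℕ} (L : Finset (Fin a))

lemma rkL_pos_aux (ha : 0 < a) {c : Fin a} {v : ℕ} (hv : v ≠ 0) :
    0 < (v : ℤ) * a + (c : ℤ) := by
  have : (1:ℤ) ≤ v := by exact_mod_cast Nat.one_le_iff_ne_zero.2 hv
  have hc : (0:ℤ) ≤ c := Int.ofNat_nonneg _
  nlinarith [Int.ofNat_lt.2 ha]

lemma rkL_ne_zero (ha : 0 < a) {c : Fin a} {v : ℕ} (hv : v ≠ 0) : rkL L (c, v) ≠ 0 := by
  have := rkL_pos_aux (c := c) ha hv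
  unfold rkL; simp only [hv, if_false]
  split <;> omega

lemma rkL_neg_iff (ha : 0 < a) {c : Fin a} {v : ℕ} (hv : v ≠ 0) :
    rkL L (c, v) < 0 ↔ c ∈ L := by
  have := rkL_pos_aux (c := c) ha hv
  unfold rkL; simp only [hv, if_false]
  split <;> simp_all <;> omega

lemma rkL_mono (ha : 0 < a) {c d : Fin a} {v w : ℕ} (hvw : v < w) :
    (v : ℤ) * a + (c : ℤ) < (w : ℤ) * a + (d : ℤ) := by
  have h1 : (c : ℤ) < a := by exact_mod_cast c.2
  have h2 : (0:ℤ) ≤ d := Int.ofNat_nonneg _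
  have h3 : (v:ℤ) + 1 ≤ w := by exact_mod_cast hvw
  nlinarith [Int.ofNat_lt.2 ha]

lemma rkL_ne (ha : 0 < a) {c d : Fin a} {v w : ℕ} (hv : v ≠ 0) (hw : w ≠ 0)
    (hvw : v ≠ w) : rkL L (c, v) ≠ rkL L (d, w) := by
  have h1 := rkL_pos_aux (c := c) ha hv
  have h2 := rkL_pos_aux (c := d) ha hw
  rcases Nat.lt_or_ge v w with h | h
  · have := rkL_mono (c := c) (d := d) ha h
    unfold rkL; simp only [hv, hw, if_false]; split <;> split <;> omega
  · have hlt : w < v := lt_of_le_of_ne h (Ne.symm hvw)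
    have := rkL_mono (c := d) (d := c) ha hlt
    unfold rkL; simp only [hv, hw, if_false]; split <;> split <;> omega

end rk

section win
variable {a n : ℕ} [NeZero a] (L : Finset (Fin a)) (σ : ColPerm a n)

lemma wval_zero : wval σ 0 = (0, 0) := by simp [wval]

lemma wval_fin (i : Fin n) : wval σ ((i : ℕ) + 1) = (σ.2 i, (σ.1 i : ℕ) + 1) := by
  have h : 1 ≤ (i:ℕ) + 1 ∧ (i:ℕ) + 1 ≤ n := ⟨le_refl _ |>.trans (by omega), i.2⟩
  rw [wval, dif_pos h]
  congr 1 <;> congr 1 <;> exact Fin.ext (by simp)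

/-- rank of the window letter in slot `i+1` (0-based `i`). -/
def rkw (i : Fin n) : ℤ := rkL L (wval σ ((i : ℕ) + 1))

lemma rkw_eq (i : Fin n) : rkw L σ i = rkL L (σ.2 i, (σ.1 i : ℕ) + 1) := by
  rw [rkw, wval_fin]

lemma rkw_ne_zero (i : Fin n) : rkw L σ i ≠ 0 := by
  rw [rkw_eq]; exact CarlitzAux.rkL_ne_zero L (NeZero.pos a) (Nat.succ_ne_zero _)

lemma rkw_neg_iff (i : Fin n) : rkw L σ i < 0 ↔ σ.2 i ∈ L := by
  rw [rkw_eq]; exact CarlitzAux.rkL_neg_iff L (NeZero.pos a) (Nat.succ_ne_zero _)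

lemma rkw_injective : Function.Injective (rkw L σ) := by
  intro i j h
  by_contra hij
  have h1 : σ.1 i ≠ σ.1 j := fun e => hij (σ.1.injective e)
  have : ((σ.1 i : ℕ) + 1) ≠ ((σ.1 j : ℕ) + 1) := by
    simpa [Fin.val_injective.eq_iff, Nat.succ_injective.eq_iff] using
      fun e => h1 (Fin.ext (by omega))
  exact CarlitzAux.rkL_ne L (NeZero.pos a) (Nat.succ_ne_zero _) (Nat.succ_ne_zero _) this
    (by rw [← rkw_eq, ← rkw_eq, h])

lemma mem_DesL_zero (hn : 0 < n) :
    0 ∈ DesL L σ ↔ rkw L σ ⟨0, hn⟩ < 0 := by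
  rw [DesL, Finset.mem_filter, Finset.mem_range]
  constructor
  · rintro ⟨-, h⟩
    simpa [wval_zero, rkL, rkw] using h
  · intro h
    refine ⟨hn, ?_⟩
    simpa [wval_zero, rkL, rkw] using h

lemma mem_DesL_succ {i : ℕ} (h : i + 1 < n) :
    (i + 1) ∈ DesL L σ ↔ rkw L σ ⟨i + 1, h⟩ < rkw L σ ⟨i, by omega⟩ := by
  rw [DesL, Finset.mem_filter, Finset.mem_range, rkw, rkw]
  constructor
  · rintro ⟨-, hh⟩; exact hh
  · intro hh; exact ⟨h, hh⟩

/-- number of `L`-descents in positions `0,…,i` -/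
def mfun (i : Fin n) : ℕ := ((DesL L σ).filter (· ≤ (i : ℕ))).card

lemma mfun_zero (h0 : 0 < n) :
    mfun L σ ⟨0, h0⟩ = if 0 ∈ DesL L σ then 1 else 0 := by
  rw [mfun]
  have : (DesL L σ).filter (· ≤ (0:ℕ)) = (DesL L σ).filter (· = 0) := by
    apply Finset.filter_congr; intro x _; simp [Nat.le_zero]
  rw [this, Finset.filter_eq']
  split <;> simp

lemma mfun_succ {i : ℕ} (h : i + 1 < n) :
    mfun L σ ⟨i + 1, h⟩ = mfun L σ ⟨i, by omega⟩ +
      (if (i+1) ∈ DesL L σ then 1 else 0) := by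
  rw [mfun, mfun]
  have hsplit : (DesL L σ).filter (· ≤ i + 1) =
      (DesL L σ).filter (· ≤ i) ∪ (DesL L σ).filter (· = i + 1) := by
    ext x
    simp only [Finset.mem_filter, Finset.mem_union]
    constructor
    · rintro ⟨hx, hle⟩
      rcases Nat.lt_or_ge x (i+1) with h' | h'
      · exact Or.inl ⟨hx, by omega⟩
      · exact Or.inr ⟨hx, by omega⟩
    · rintro (⟨hx, hle⟩ | ⟨hx, he⟩) <;> exact ⟨by assumption, by omega⟩
  rw [hsplit, Finset.card_union_of_disjoint, Finset.filter_eq']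
  · split <;> simp
  · rw [Finset.disjoint_filter]
    intro x _ hle he; omega

lemma mfun_mono : Monotone (mfun L σ) := by
  intro i j hij
  apply Finset.card_le_card
  apply Finset.monotone_filter_right
  intro x _ hx; exact hx.trans (by exact_mod_cast hij)

lemma mfun_last (h0 : 0 < n) : mfun L σ ⟨n - 1, by omega⟩ = desL L σ := by
  rw [mfun, desL]
  congr 1
  apply Finset.filter_true_of_mem
  intro x hx
  have hxn : x < n := Finset.mem_range.1 (Finset.mem_of_mem_filter x hx)
  show x ≤ (⟨n-1, by omega⟩ : Fin n)
  simp only [Fin.val_mk]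
  omega

lemma DesL_subset : DesL L σ ⊆ Finset.range n := Finset.filter_subset _ _

lemma rmaj_eq_sum_mfun : rmajL L σ = ∑ i : Fin n, mfun L σ i := by
  rw [rmajL]
  have : ∀ i : Fin n, mfun L σ i = ∑ d ∈ DesL L σ, (if d ≤ (i:ℕ) then 1 else 0) := by
    intro i; rw [mfun, Finset.card_filter]
  simp_rw [this]
  rw [Finset.sum_comm]
  apply Finset.sum_congr rfl
  intro d hd
  have hdn : d < n := Finset.mem_range.1 (DesL_subset L σ hd)
  rw [Finset.sum_ite, Finset.sum_const_zero, add_zero, Finset.sum_const, smul_eq_mul, mul_one]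
  have : (Finset.univ.filter fun i : Fin n => d ≤ (i:ℕ)).card = (Finset.Ico d n).card := by
    apply Finset.card_bij (fun (i : Fin n) (_ : i ∈ Finset.univ.filter fun i : Fin n => d ≤ (i:ℕ)) => (i : ℕ))
    · intro i hi; simp only [Finset.mem_filter] at hi
      exact Finset.mem_Ico.2 ⟨hi.2, i.2⟩
    · intro i _ j _ h; exact Fin.ext h
    · intro x hx
      rcases Finset.mem_Ico.1 hx with ⟨h1, h2⟩
      exact ⟨⟨x, h2⟩, by simp [h1], rfl⟩
  rw [this, Nat.card_Ico]

end win
section compat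
variable {a n : ℕ} [NeZero a] (L : Finset (Fin a)) (σ : ColPerm a n)

lemma monotone_of_step {n : ℕ} {f : Fin n → ℕ}
    (h : ∀ i : ℕ, ∀ hi : i + 1 < n, f ⟨i, by omega⟩ ≤ f ⟨i+1, hi⟩) : Monotone f := by
  intro i j hij
  obtain ⟨k, hk⟩ : ∃ k, (j:ℕ) = (i:ℕ) + k := ⟨j - i, by omega⟩
  have hjn : (j:ℕ) < n := j.2
  have : ∀ k, ∀ hk : (i:ℕ) + k < n, f i ≤ f ⟨(i:ℕ) + k, hk⟩ := by
    intro k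
    induction k with
    | zero => intro hk; exact le_of_eq (congrArg f (Fin.ext rfl))
    | succ m ih =>
      intro hk
      have h1 : (i:ℕ) + m < n := by omega
      exact (ih h1).trans (by have := h ((i:ℕ) + m) (by omega); exact this)
  have := this k (by omega)
  calc f i ≤ f ⟨(i:ℕ) + k, by omega⟩ := this
    _ = f j := congrArg f (Fin.ext (by simp [hk]))

variable {b : Fin n → ℕ} (hn : 0 < n)

/-- compatibility of a height function with the descent structure -/
def Compat (b : Fin n → ℕ) (hn : 0 < n) : Prop :=
  (0 ∈ DesL L σ → 1 ≤ b ⟨0, hn⟩) ∧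
  ∀ i : ℕ, ∀ hi : i + 1 < n,
    b ⟨i, by omega⟩ ≤ b ⟨i+1, hi⟩ ∧ ((i+1) ∈ DesL L σ → b ⟨i, by omega⟩ < b ⟨i+1, hi⟩)

lemma compat_le (hc : Compat L σ b hn) : ∀ i : Fin n, mfun L σ i ≤ b i := by
  have key : ∀ i : ℕ, ∀ hi : i < n, mfun L σ ⟨i, hi⟩ ≤ b ⟨i, hi⟩ := by
    intro i
    induction i with
    | zero =>
      intro hi
      rw [mfun_zero L σ hn]
      split
      · exact hc.1 (by assumption)
      · exact Nat.zero_le _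
    | succ m ih =>
      intro hi
      rw [mfun_succ L σ hi]
      have h1 := ih (by omega)
      have h2 := hc.2 m hi
      split
      · have := h2.2 (by assumption); omega
      · have := h2.1; omega
  intro i
  have := key i i.2
  simpa using this

lemma compat_lam_mono (hc : Compat L σ b hn) :
    Monotone (fun i => b i - mfun L σ i) := by
  apply monotone_of_step
  intro i hi
  show b ⟨i, by omega⟩ - mfun L σ ⟨i, by omega⟩ ≤ b ⟨i+1, hi⟩ - mfun L σ ⟨i+1, hi⟩
  have h1 := compat_le L σ hn hc ⟨i, by omega⟩
  have h2 := compat_le L σ hn hc ⟨i+1, hi⟩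
  have h3 := hc.2 i hi
  by_cases hd : (i+1) ∈ DesL L σ
  · rw [mfun_succ L σ hi, if_pos hd]
    have := h3.2 hd
    omega
  · rw [mfun_succ L σ hi, if_neg hd]
    have := h3.1
    omega

lemma mfun_zero_imp : ∀ i : Fin n, mfun L σ i = 0 → 0 < rkw L σ i := by
  have key : ∀ i : ℕ, ∀ hi : i < n, mfun L σ ⟨i, hi⟩ = 0 → 0 < rkw L σ ⟨i, hi⟩ := by
    intro i
    induction i with
    | zero =>
      intro hi hm
      rw [mfun_zero L σ hi] at hm
      have : 0 ∉ DesL L σ := by intro h; simp [h] at hm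
      rw [mem_DesL_zero L σ hi] at this
      have := rkw_ne_zero L σ ⟨0, hi⟩
      omega
    | succ m ih =>
      intro hi hm
      rw [mfun_succ L σ hi] at hm
      have h1 : mfun L σ ⟨m, by omega⟩ = 0 := by omega
      have h2 : (m+1) ∉ DesL L σ := by intro h; simp [h] at hm
      rw [mem_DesL_succ L σ hi] at h2
      have h3 := ih (by omega) h1
      have h4 := rkw_injective L σ (a₁ := ⟨m+1, hi⟩) (a₂ := ⟨m, by omega⟩)
      have h5 : rkw L σ ⟨m+1, hi⟩ ≠ rkw L σ ⟨m, by omega⟩ := by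
        intro h; exact absurd (h4 h) (by simp)
      omega
  intro i hm
  have := key i i.2 (by rw [show (⟨(i:ℕ), i.2⟩ : Fin n) = i from Fin.ext rfl]; exact hm)
  rwa [show (⟨(i:ℕ), i.2⟩ : Fin n) = i from Fin.ext rfl] at this

lemma compat_of_mono_lam {lam : Fin n → ℕ} (hlam : Monotone lam) :
    Compat L σ (fun i => mfun L σ i + lam i) hn := by
  constructor
  · intro h0
    simp only
    rw [mfun_zero L σ hn, if_pos h0]; omega
  · intro i hi
    have h1 := hlam (a := ⟨i, by omega⟩) (b := ⟨i+1, hi⟩) (by simp [Fin.le_def])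
    simp only
    rw [mfun_succ L σ hi]
    constructor
    · split <;> omega
    · intro h; rw [if_pos h]; omega

end compat
section bij
variable {a n : ℕ} [NeZero a] (L : Finset (Fin a))

lemma strictMono_of_step {n : ℕ} {α : Type*} [Preorder α] {f : Fin n → α}
    (h : ∀ i : ℕ, ∀ hi : i + 1 < n, f ⟨i, by omega⟩ < f ⟨i+1, hi⟩) : StrictMono f := by
  intro i j hij
  have hjn : (j:ℕ) < n := j.2
  have hij' : (i:ℕ) < (j:ℕ) := hij
  obtain ⟨k, hk⟩ : ∃ k, (j:ℕ) = (i:ℕ) + (k + 1) := ⟨j - i - 1, by omega⟩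
  have key : ∀ k, ∀ hk : (i:ℕ) + (k+1) < n, f i < f ⟨(i:ℕ) + (k+1), hk⟩ := by
    intro k
    induction k with
    | zero =>
      intro hk
      exact h i (by omega)
    | succ m ih =>
      intro hk
      have h1 : (i:ℕ) + (m+1) < n := by omega
      exact (ih h1).trans (h ((i:ℕ) + (m+1)) (by omega))
  have := key k (by omega)
  calc f i < f ⟨(i:ℕ) + (k+1), by omega⟩ := this
    _ = f j := congrArg f (Fin.ext (by simp [hk]))

/-- the lexicographic key used to sort a digit sequence -/
def keyg (g : Fin n → Fin a × ℕ) (j : Fin n) : ℤ ×ₗ ℤ :=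
  toLex (((g j).2 : ℤ), rkL L ((g j).1, (j : ℕ) + 1))

lemma keyg_injective (g : Fin n → Fin a × ℕ) : Function.Injective (keyg L g) := by
  intro i j h
  by_contra hij
  have h2 : ((i:ℕ) + 1) ≠ ((j:ℕ) + 1) := fun e => hij (Fin.ext (by omega))
  have := CarlitzAux.rkL_ne (c := (g i).1) (d := (g j).1) L (NeZero.pos a)
    (Nat.succ_ne_zero _) (Nat.succ_ne_zero _) h2
  have h3 : (ofLex (keyg L g i)).2 = (ofLex (keyg L g j)).2 := by rw [h]
  exact this h3

/-- the sorting permutation -/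
noncomputable def sortg (g : Fin n → Fin a × ℕ) : Equiv.Perm (Fin n) :=
  Tuple.sort (keyg L g)

/-- the colored permutation associated to a digit sequence -/
noncomputable def Fsig (g : Fin n → Fin a × ℕ) : ColPerm a n :=
  (sortg L g, fun i => (g (sortg L g i)).1)

/-- sorted heights -/
noncomputable def Fb (g : Fin n → Fin a × ℕ) (i : Fin n) : ℕ := (g (sortg L g i)).2

noncomputable def Flam (g : Fin n → Fin a × ℕ) (i : Fin n) : ℕ :=
  Fb L g i - mfun L (Fsig L g) i

lemma key_strictMono (g : Fin n → Fin a × ℕ) :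
    StrictMono (keyg L g ∘ sortg L g) := by
  have h1 : Monotone (keyg L g ∘ sortg L g) := Tuple.monotone_sort _
  exact h1.strictMono_of_injective ((keyg_injective L g).comp (sortg L g).injective)

lemma rkw_Fsig (g : Fin n → Fin a × ℕ) (i : Fin n) :
    rkw L (Fsig L g) i = (ofLex (keyg L g (sortg L g i))).2 := by
  rw [rkw_eq]; rfl

lemma Fb_key (g : Fin n → Fin a × ℕ) (i : Fin n) :
    ((Fb L g i : ℤ)) = (ofLex (keyg L g (sortg L g i))).1 := rfl

lemma compat_Fb (hn : 0 < n) {s : ℕ} {g : Fin n → Fin a × ℕ}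
    (hg : ∀ j, g j ∈ Dset a L s) : Compat L (Fsig L g) (Fb L g) hn := by
  constructor
  · intro h0
    have hneg : rkw L (Fsig L g) ⟨0, hn⟩ < 0 := (mem_DesL_zero L _ hn).1 h0
    have hcol : (Fsig L g).2 ⟨0, hn⟩ ∈ L := (rkw_neg_iff L _ _).1 hneg
    have hD := hg (sortg L g ⟨0, hn⟩)
    rw [Dset, Finset.mem_filter] at hD
    have : ¬((g (sortg L g ⟨0, hn⟩)).1 ∈ L ∧ (g (sortg L g ⟨0, hn⟩)).2 = 0) := hD.2
    have hb : (g (sortg L g ⟨0, hn⟩)).2 ≠ 0 := fun e => this ⟨hcol, e⟩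
    exact Nat.one_le_iff_ne_zero.2 hb
  · intro i hi
    have hlt := key_strictMono L g
      (show (⟨i, by omega⟩ : Fin n) < ⟨i+1, hi⟩ by simp [Fin.lt_def])
    rw [Function.comp_apply, Function.comp_apply] at hlt
    rw [show (keyg L g (sortg L g ⟨i, by omega⟩)) =
      toLex (ofLex (keyg L g (sortg L g ⟨i, by omega⟩))) from rfl,
      show (keyg L g (sortg L g ⟨i+1, hi⟩)) =
      toLex (ofLex (keyg L g (sortg L g ⟨i+1, hi⟩))) from rfl,
      Prod.Lex.lt_iff] at hlt
    have hbkey1 := Fb_key L g ⟨i, by omega⟩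
    have hbkey2 := Fb_key L g ⟨i+1, hi⟩
    have hrk1 := rkw_Fsig L g ⟨i, by omega⟩
    have hrk2 := rkw_Fsig L g ⟨i+1, hi⟩
    rcases hlt with hlt | ⟨heq, hlt⟩
    · have : Fb L g ⟨i, by omega⟩ < Fb L g ⟨i+1, hi⟩ := by
        simp only [ofLex_toLex] at hlt; rw [← hbkey1, ← hbkey2] at hlt; exact_mod_cast hlt
      exact ⟨this.le, fun _ => this⟩
    · have hb : Fb L g ⟨i, by omega⟩ = Fb L g ⟨i+1, hi⟩ := by
        have : ((Fb L g ⟨i, by omega⟩ : ℤ)) = ((Fb L g ⟨i+1, hi⟩ : ℤ)) := by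
          rw [hbkey1, hbkey2]; exact heq
        exact_mod_cast this
      refine ⟨hb.le, fun hdes => ?_⟩
      rw [mem_DesL_succ L _ hi] at hdes
      rw [hrk1, hrk2] at hdes
      exact absurd hdes (not_lt.2 hlt.le)

end bij
section bij2
variable {a n : ℕ} [NeZero a] (L : Finset (Fin a))

/-- tuples λ compatible with σ at level s -/
def LamSet (s : ℕ) (hn : 0 < n) (σ : ColPerm a n) : Finset (Fin n → ℕ) :=
  (Fintype.piFinset fun _ => Finset.range (s+1)).filter
    (fun lam => Monotone lam ∧ desL L σ + lam ⟨n-1, by omega⟩ ≤ s)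

/-- the digit sequence associated to a pair (σ, λ) -/
def Gg (σ : ColPerm a n) (lam : Fin n → ℕ) (j : Fin n) : Fin a × ℕ :=
  (σ.2 (σ.1⁻¹ j), mfun L σ (σ.1⁻¹ j) + lam (σ.1⁻¹ j))

lemma keyg_Gg (σ : ColPerm a n) (lam : Fin n → ℕ) (i : Fin n) :
    keyg L (Gg L σ lam) (σ.1 i) =
      toLex (((mfun L σ i + lam i : ℕ) : ℤ), rkw L σ i) := by
  rw [keyg, Gg]
  simp only [Equiv.Perm.inv_def, Equiv.symm_apply_apply]
  rw [rkw_eq]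

lemma keyg_Gg_strictMono (hn : 0 < n) (σ : ColPerm a n) {lam : Fin n → ℕ}
    (hlam : Monotone lam) :
    StrictMono (keyg L (Gg L σ lam) ∘ σ.1) := by
  apply strictMono_of_step
  intro i hi
  rw [Function.comp_apply, Function.comp_apply, keyg_Gg, keyg_Gg, Prod.Lex.lt_iff]
  simp only [ofLex_toLex]
  have hl := hlam (a := ⟨i, by omega⟩) (b := ⟨i+1, hi⟩) (by simp [Fin.le_def])
  by_cases hdes : (i+1) ∈ DesL L σ
  · left
    have h1 : mfun L σ ⟨i+1, hi⟩ = mfun L σ ⟨i, by omega⟩ + 1 := by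
      rw [mfun_succ L σ hi, if_pos hdes]
    exact_mod_cast (show mfun L σ ⟨i, by omega⟩ + lam ⟨i, by omega⟩ <
        mfun L σ ⟨i+1, hi⟩ + lam ⟨i+1, hi⟩ by omega)
  · have hm : mfun L σ ⟨i+1, hi⟩ = mfun L σ ⟨i, by omega⟩ := by
      rw [mfun_succ L σ hi, if_neg hdes]; omega
    rcases Nat.lt_or_ge (mfun L σ ⟨i, by omega⟩ + lam ⟨i, by omega⟩)
      (mfun L σ ⟨i+1, hi⟩ + lam ⟨i+1, hi⟩) with h | h
    · left; exact_mod_cast h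
    · right
      have heq : mfun L σ ⟨i, by omega⟩ + lam ⟨i, by omega⟩ =
          mfun L σ ⟨i+1, hi⟩ + lam ⟨i+1, hi⟩ := by omega
      refine ⟨by exact_mod_cast heq, ?_⟩
      rw [mem_DesL_succ L σ hi] at hdes
      have hne := rkw_injective L σ (a₁ := ⟨i+1, hi⟩) (a₂ := ⟨i, by omega⟩)
      have : rkw L σ ⟨i+1, hi⟩ ≠ rkw L σ ⟨i, by omega⟩ := fun e => by
        have := hne e; simp at this
      omega

lemma sortg_Gg (hn : 0 < n) (σ : ColPerm a n) {lam : Fin n → ℕ}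
    (hlam : Monotone lam) : sortg L (Gg L σ lam) = σ.1 := by
  rw [sortg]
  symm
  rw [Tuple.eq_sort_iff]
  have hs := keyg_Gg_strictMono L hn σ hlam
  exact ⟨hs.monotone, fun i j hij he => absurd he (hs hij).ne⟩

lemma Gg_mem (hn : 0 < n) {s : ℕ} {σ : ColPerm a n} {lam : Fin n → ℕ}
    (hlam : lam ∈ LamSet L s hn σ) (j : Fin n) : Gg L σ lam j ∈ Dset a L s := by
  rw [LamSet, Finset.mem_filter] at hlam
  obtain ⟨-, hmono, hbound⟩ := hlam
  rw [Dset, Finset.mem_filter]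
  set i := σ.1⁻¹ j
  have hi2 : (i : ℕ) < n := i.2
  have hlast : (i : ℕ) ≤ n - 1 := by omega
  have h1 : mfun L σ i ≤ desL L σ := by
    rw [← mfun_last L σ hn]
    exact mfun_mono L σ (by simp [Fin.le_def]; omega)
  have h2 : lam i ≤ lam ⟨n-1, by omega⟩ := hmono (by simp [Fin.le_def]; omega)
  constructor
  · refine Finset.mem_product.2 ⟨Finset.mem_univ _, Finset.mem_range.2 ?_⟩
    show mfun L σ i + lam i < s + 1
    omega
  · rintro ⟨hcol, hzero⟩
    have hm0 : mfun L σ i = 0 := by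
      have : mfun L σ i + lam i = 0 := hzero
      omega
    have := mfun_zero_imp L σ i hm0
    have := (rkw_neg_iff L σ i).2 hcol
    omega

end bij2
section bij3
variable {a n : ℕ} [NeZero a] (L : Finset (Fin a))

lemma Fsig_mem (hn : 0 < n) {s : ℕ} {g : Fin n → Fin a × ℕ}
    (hg : ∀ j, g j ∈ Dset a L s) : Flam L g ∈ LamSet L s hn (Fsig L g) := by
  have hc := compat_Fb L hn hg
  have hle := compat_le L (Fsig L g) hn hc
  have hmono : Monotone (Flam L g) := compat_lam_mono L (Fsig L g) hn hc
  have hbs : ∀ i, Fb L g i ≤ s := by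
    intro i
    have := hg (sortg L g i)
    rw [Dset, Finset.mem_filter] at this
    have := (Finset.mem_product.1 this.1).2
    exact Nat.lt_succ_iff.1 (Finset.mem_range.1 this)
  rw [LamSet, Finset.mem_filter]
  refine ⟨?_, hmono, ?_⟩
  · rw [Fintype.mem_piFinset]
    intro i
    rw [Finset.mem_range, Nat.lt_succ_iff]
    exact le_trans (Nat.sub_le _ _) (hbs i)
  · rw [← mfun_last L (Fsig L g) hn]
    have h1 := hle ⟨n-1, by omega⟩
    have h2 := hbs ⟨n-1, by omega⟩
    rw [Flam]
    omega

lemma left_inv_bij (hn : 0 < n) {s : ℕ} {g : Fin n → Fin a × ℕ}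
    (hg : ∀ j, g j ∈ Dset a L s) : Gg L (Fsig L g) (Flam L g) = g := by
  have hle := compat_le L (Fsig L g) hn (compat_Fb L hn hg)
  funext j
  rw [Gg]
  have h1 : (Fsig L g).1 = sortg L g := rfl
  have h2 : (Fsig L g).2 ((sortg L g)⁻¹ j) = (g (sortg L g ((sortg L g)⁻¹ j))).1 := rfl
  rw [h1]
  have h3 : mfun L (Fsig L g) ((sortg L g)⁻¹ j) + Flam L g ((sortg L g)⁻¹ j)
      = Fb L g ((sortg L g)⁻¹ j) := by
    have := hle ((sortg L g)⁻¹ j); rw [Flam]; omega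
  rw [h2, h3, Fb]
  simp only [Equiv.Perm.inv_def, Equiv.apply_symm_apply]

lemma right_inv_bij (hn : 0 < n) {s : ℕ} {σ : ColPerm a n} {lam : Fin n → ℕ}
    (hlam : lam ∈ LamSet L s hn σ) :
    (⟨Fsig L (Gg L σ lam), Flam L (Gg L σ lam)⟩ : Σ _ : ColPerm a n, Fin n → ℕ)
      = ⟨σ, lam⟩ := by
  rw [LamSet, Finset.mem_filter] at hlam
  obtain ⟨-, hmono, -⟩ := hlam
  have hsort := sortg_Gg L hn σ hmono
  have hFsig : Fsig L (Gg L σ lam) = σ := by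
    rw [Fsig, hsort]
    refine Prod.ext rfl ?_
    funext i
    show (Gg L σ lam (σ.1 i)).1 = σ.2 i
    rw [Gg]
    simp only [Equiv.Perm.inv_def, Equiv.symm_apply_apply]
  have hFb : ∀ i, Fb L (Gg L σ lam) i = mfun L σ i + lam i := by
    intro i
    rw [Fb, hsort]
    show (Gg L σ lam (σ.1 i)).2 = _
    rw [Gg]
    simp only [Equiv.Perm.inv_def, Equiv.symm_apply_apply]
  have hFlam : Flam L (Gg L σ lam) = lam := by
    funext i
    rw [Flam, hFb i, hFsig]
    omega
  rw [hFlam, hFsig]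

lemma sum_bij_core (hn : 0 < n) (s : ℕ) :
    ∑ g ∈ Fintype.piFinset (fun _ : Fin n => Dset a L s),
        (X : Polynomial ℚ) ^ (∑ j, (g j).2)
      = ∑ p ∈ Finset.univ.sigma (fun σ : ColPerm a n => LamSet L s hn σ),
          (X : Polynomial ℚ) ^ (rmajL L p.1 + ∑ i, p.2 i) := by
  apply Finset.sum_nbij'
    (i := fun g => (⟨Fsig L g, Flam L g⟩ : Σ _ : ColPerm a n, Fin n → ℕ))
    (j := fun p => Gg L p.1 p.2)
  · intro g hg
    rw [Fintype.mem_piFinset] at hg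
    rw [Finset.mem_sigma]
    exact ⟨Finset.mem_univ _, Fsig_mem L hn hg⟩
  · intro p hp
    rw [Finset.mem_sigma] at hp
    rw [Fintype.mem_piFinset]
    exact fun j => Gg_mem L hn hp.2 j
  · intro g hg
    rw [Fintype.mem_piFinset] at hg
    exact left_inv_bij L hn hg
  · intro p hp
    rw [Finset.mem_sigma] at hp
    have := right_inv_bij L hn hp.2
    exact this
  · intro g hg
    rw [Fintype.mem_piFinset] at hg
    congr 1
    have hle := compat_le L (Fsig L g) hn (compat_Fb L hn hg)
    have hFb : ∀ i, mfun L (Fsig L g) i + Flam L g i = Fb L g i := by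
      intro i; have := hle i; rw [Flam]; omega
    calc ∑ j, (g j).2 = ∑ i, (g (sortg L g i)).2 :=
          (Equiv.sum_comp (sortg L g) (fun j => (g j).2)).symm
      _ = ∑ i, (mfun L (Fsig L g) i + Flam L g i) := by
          apply Finset.sum_congr rfl; intro i _; rw [hFb i]; rfl
      _ = rmajL L (Fsig L g) + ∑ i, Flam L g i := by
          rw [Finset.sum_add_distrib, rmaj_eq_sum_mfun]
end bij3
section count
variable {a n : ℕ} [NeZero a] (L : Finset (Fin a))

lemma sumD (s : ℕ) :
    ∑ x ∈ Dset a L s, (X : Polynomial ℚ) ^ x.2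
      = (a : Polynomial ℚ) * (∑ j ∈ Finset.range (s+1), X ^ j) - (L.card : Polynomial ℚ) := by
  have hsub : (L ×ˢ ({0} : Finset ℕ)) ⊆ (Finset.univ ×ˢ Finset.range (s+1)) := by
    intro x hx
    rcases Finset.mem_product.1 hx with ⟨h1, h2⟩
    exact Finset.mem_product.2 ⟨Finset.mem_univ _, by
      simp only [Finset.mem_singleton] at h2
      simp [h2]⟩
  have hD : Dset a L s = (Finset.univ ×ˢ Finset.range (s+1)) \ (L ×ˢ ({0} : Finset ℕ)) := by
    ext ⟨c, b⟩
    simp only [Dset, Finset.mem_filter, Finset.mem_sdiff, Finset.mem_product,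
      Finset.mem_univ, true_and, Finset.mem_singleton, Finset.mem_range]
    try tauto
  rw [hD, Finset.sum_sdiff_eq_sub hsub]
  have e1 : ∑ x ∈ (Finset.univ ×ˢ Finset.range (s+1) : Finset (Fin a × ℕ)),
      (X : Polynomial ℚ) ^ x.2 = (a : Polynomial ℚ) * (∑ j ∈ Finset.range (s+1), X ^ j) := by
    rw [Finset.sum_product]
    dsimp only
    rw [Finset.sum_const, Finset.card_univ, Fintype.card_fin, nsmul_eq_mul]
  have e2 : ∑ x ∈ (L ×ˢ ({0} : Finset ℕ)), (X : Polynomial ℚ) ^ x.2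
      = (L.card : Polynomial ℚ) := by
    rw [Finset.sum_product]
    simp
  rw [e1, e2]

lemma pow_expand (s : ℕ) :
    ((a : Polynomial ℚ) * (∑ j ∈ Finset.range (s+1), X ^ j) - (L.card : Polynomial ℚ)) ^ n
      = ∑ g ∈ Fintype.piFinset (fun _ : Fin n => Dset a L s),
          (X : Polynomial ℚ) ^ (∑ j, (g j).2) := by
  rw [← sumD L s]
  rw [show (∑ x ∈ Dset a L s, (X : Polynomial ℚ) ^ x.2) ^ n
      = ∏ _i : Fin n, (∑ x ∈ Dset a L s, (X : Polynomial ℚ) ^ x.2) by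
    rw [Finset.prod_const, Finset.card_univ, Fintype.card_fin]]
  rw [Finset.prod_univ_sum]
  apply Finset.sum_congr rfl
  intro g _
  rw [← Finset.prod_pow_eq_pow_sum]

lemma lamset_sum (hn : 0 < n) (s : ℕ) (σ : ColPerm a n) :
    ∑ lam ∈ LamSet L s hn σ, (X : Polynomial ℚ) ^ (rmajL L σ + ∑ i, lam i)
      = if desL L σ ≤ s then X ^ rmajL L σ * Kp n (s - desL L σ) else 0 := by
  by_cases hd : desL L σ ≤ s
  · rw [if_pos hd]
    have hset : LamSet L s hn σ = MonoSet n (s - desL L σ) := by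
      ext lam
      rw [LamSet, MonoSet, Finset.mem_filter, Finset.mem_filter,
        Fintype.mem_piFinset, Fintype.mem_piFinset]
      simp only [Finset.mem_range, Nat.lt_succ_iff]
      constructor
      · rintro ⟨hb, hmono, hbound⟩
        refine ⟨fun i => ?_, hmono⟩
        have h1 : lam i ≤ lam ⟨n-1, by omega⟩ := by
          apply hmono
          simp only [Fin.le_def, Fin.val_mk]
          have := i.2; omega
        omega
      · rintro ⟨hb, hmono⟩
        have h1 : lam ⟨n-1, by omega⟩ ≤ s - desL L σ := hb _
        exact ⟨fun i => by have := hb i; omega, hmono, by omega⟩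
    rw [hset, Kp, Finset.mul_sum]
    apply Finset.sum_congr rfl
    intro lam _
    rw [pow_add]
  · rw [if_neg hd]
    have hset : LamSet L s hn σ = ∅ := by
      ext lam
      rw [LamSet, Finset.mem_filter]
      simp only [Finset.notMem_empty, iff_false]
      rintro ⟨-, -, hbound⟩
      omega
    rw [hset, Finset.sum_empty]

lemma main_count (hn : 0 < n) (s : ℕ) :
    ((a : Polynomial ℚ) * (∑ j ∈ Finset.range (s+1), X ^ j) - (L.card : Polynomial ℚ)) ^ n
      = ∑ σ : ColPerm a n,
          (if desL L σ ≤ s then (X : Polynomial ℚ) ^ rmajL L σ * Kp n (s - desL L σ) else 0) := by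
  rw [pow_expand L s, sum_bij_core L hn s, Finset.sum_sigma]
  apply Finset.sum_congr rfl
  intro σ _
  exact lamset_sum L hn s σ

end count
section series
variable {a n : ℕ} [NeZero a] (L : Finset (Fin a))

lemma Kp_zero (r : ℕ) : Kp 0 r = 1 := by
  rw [Kp]
  have h1 : MonoSet 0 r = Fintype.piFinset (fun _ : Fin 0 => Finset.range (r+1)) := by
    rw [MonoSet]
    apply Finset.filter_true_of_mem
    intro f _ i
    exact i.elim0
  rw [h1]
  have h2 : ∀ f ∈ Fintype.piFinset (fun _ : Fin 0 => Finset.range (r+1)),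
      (X : Polynomial ℚ) ^ (∑ i, f i) = 1 := by
    intro f _
    rw [Finset.sum_of_isEmpty]
    exact pow_zero _
  rw [Finset.sum_congr rfl h2, Finset.sum_const, Fintype.card_piFinset]
  simp

lemma Kp_succ (m r : ℕ) :
    Kp (m+1) r = ∑ p ∈ Finset.HasAntidiagonal.antidiagonal r, Kp m p.1 * (X : Polynomial ℚ) ^ ((m+1) * p.2) := by
  have hrhs : ∑ p ∈ Finset.HasAntidiagonal.antidiagonal r, Kp m p.1 * (X : Polynomial ℚ) ^ ((m+1) * p.2)
      = ∑ q ∈ (Finset.HasAntidiagonal.antidiagonal r).sigma (fun p => MonoSet m p.1),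
          (X : Polynomial ℚ) ^ ((∑ i, q.2 i) + (m+1) * q.1.2) := by
    rw [Finset.sum_sigma]
    apply Finset.sum_congr rfl
    intro p _
    rw [Kp, Finset.sum_mul]
    apply Finset.sum_congr rfl
    intro mu _
    rw [pow_add]
  rw [hrhs, Kp]
  apply Finset.sum_nbij'
    (i := fun lam => (⟨(r - lam 0, lam 0), fun i => lam i.succ - lam 0⟩ :
      Σ _ : ℕ × ℕ, Fin m → ℕ))
    (j := fun q => Fin.cons q.1.2 (fun i => q.1.2 + q.2 i))
  · intro lam hlam
    rw [MonoSet, Finset.mem_filter, Fintype.mem_piFinset] at hlam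
    obtain ⟨hb, hmono⟩ := hlam
    have hb' : ∀ i, lam i ≤ r := fun i => Nat.lt_succ_iff.1 (Finset.mem_range.1 (hb i))
    rw [Finset.mem_sigma]
    refine ⟨?_, ?_⟩ <;> dsimp only
    · rw [Finset.HasAntidiagonal.mem_antidiagonal]
      have := hb' 0; omega
    · rw [MonoSet, Finset.mem_filter, Fintype.mem_piFinset]
      constructor
      · intro i
        rw [Finset.mem_range, Nat.lt_succ_iff]
        have h0 := hb' i.succ
        have h1 : lam 0 ≤ lam i.succ := hmono (Fin.zero_le _)
        omega
      · intro i j hij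
        have h1 : lam i.succ ≤ lam j.succ := hmono (Fin.succ_le_succ_iff.2 hij)
        have h2 : lam 0 ≤ lam i.succ := hmono (Fin.zero_le _)
        show lam i.succ - lam 0 ≤ lam j.succ - lam 0
        omega
  · intro q hq
    rw [Finset.mem_sigma, Finset.HasAntidiagonal.mem_antidiagonal] at hq
    obtain ⟨hp, hmu⟩ := hq
    rw [MonoSet, Finset.mem_filter, Fintype.mem_piFinset] at hmu
    obtain ⟨hb, hmono⟩ := hmu
    have hb' : ∀ i, q.2 i ≤ q.1.1 := fun i => Nat.lt_succ_iff.1 (Finset.mem_range.1 (hb i))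
    rw [MonoSet, Finset.mem_filter, Fintype.mem_piFinset]
    constructor
    · intro i
      rw [Finset.mem_range, Nat.lt_succ_iff]
      refine Fin.cases ?_ ?_ i
      · rw [Fin.cons_zero]; omega
      · intro k; rw [Fin.cons_succ]; have := hb' k; omega
    · apply monotone_of_step
      intro i hi
      match i with
      | 0 =>
        have e0 : (⟨0, by omega⟩ : Fin (m+1)) = 0 := rfl
        have e1 : (⟨1, hi⟩ : Fin (m+1)) = Fin.succ ⟨0, by omega⟩ := rfl
        rw [e0, e1, Fin.cons_zero, Fin.cons_succ]
        omega
      | Nat.succ k =>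
        have e0 : (⟨k+1, by omega⟩ : Fin (m+1)) = Fin.succ ⟨k, by omega⟩ := rfl
        have e1 : (⟨k+1+1, hi⟩ : Fin (m+1)) = Fin.succ ⟨k+1, by omega⟩ := rfl
        rw [e0, e1, Fin.cons_succ, Fin.cons_succ]
        have : q.2 ⟨k, by omega⟩ ≤ q.2 ⟨k+1, by omega⟩ := hmono (by simp [Fin.le_def])
        omega
  · intro lam hlam
    rw [MonoSet, Finset.mem_filter] at hlam
    have hmono := hlam.2
    funext k
    refine Fin.cases ?_ ?_ k
    · dsimp only
      rw [Fin.cons_zero]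
    · intro i
      dsimp only
      rw [Fin.cons_succ]
      have : lam 0 ≤ lam i.succ := hmono (Fin.zero_le _)
      omega
  · intro q hq
    rw [Finset.mem_sigma, Finset.HasAntidiagonal.mem_antidiagonal] at hq
    rcases q with ⟨⟨p1, p2⟩, mu⟩
    simp only [Fin.cons_zero, Fin.cons_succ]
    have h1 : r - p2 = p1 := by simp at hq; omega
    have h2 : (fun i => p2 + mu i - p2) = mu := funext fun i => by omega
    rw [h1, h2]
  · intro lam hlam
    rw [MonoSet, Finset.mem_filter] at hlam
    have hmono := hlam.2
    congr 1
    have key : ∑ i : Fin m, lam i.succ = (∑ i : Fin m, (lam i.succ - lam 0)) + m * lam 0 := by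
      have : ∀ i : Fin m, lam i.succ = (lam i.succ - lam 0) + lam 0 := by
        intro i
        have : lam 0 ≤ lam i.succ := hmono (Fin.zero_le _)
        omega
      rw [Finset.sum_congr rfl (fun i _ => this i), Finset.sum_add_distrib,
        Finset.sum_const, Finset.card_univ, Fintype.card_fin, smul_eq_mul]
    rw [Fin.sum_univ_succ, key]
    ring

/-- the product of geometric series -/
noncomputable def Gser (m : ℕ) : PowerSeries (Polynomial ℚ) :=
  ∏ j ∈ Finset.range (m+1), PowerSeries.mk (fun k => (X : Polynomial ℚ) ^ (j * k))

lemma coeff_Gser (m : ℕ) : ∀ r, PowerSeries.coeff r (Gser m) = Kp m r := by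
  induction m with
  | zero =>
    intro r
    rw [Gser, Finset.prod_range_one, PowerSeries.coeff_mk, Kp_zero]
    simp
  | succ m ih =>
    intro r
    rw [Gser, Finset.prod_range_succ, show ∏ j ∈ Finset.range (m+1),
      PowerSeries.mk (fun k => (X : Polynomial ℚ) ^ (j * k)) = Gser m from rfl]
    rw [PowerSeries.coeff_mul, Kp_succ]
    apply Finset.sum_congr rfl
    intro p _
    rw [ih p.1, PowerSeries.coeff_mk]

lemma geom_inv (c : Polynomial ℚ) :
    (1 - PowerSeries.C c * PowerSeries.X) *
      PowerSeries.mk (fun k => c ^ k) = 1 := by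
  ext k
  rw [sub_mul, one_mul, map_sub, mul_assoc, PowerSeries.coeff_C_mul]
  cases k with
  | zero =>
    rw [PowerSeries.coeff_zero_X_mul, PowerSeries.coeff_mk]
    simp
  | succ k =>
    rw [PowerSeries.coeff_succ_X_mul, PowerSeries.coeff_mk, PowerSeries.coeff_mk]
    rw [pow_succ, PowerSeries.coeff_one]
    simp [mul_comm]

lemma prod_inv (m : ℕ) :
    (∏ j ∈ Finset.range (m + 1),
        (1 - PowerSeries.C (R := Polynomial ℚ) (X ^ j) * PowerSeries.X)) * Gser m = 1 := by
  rw [Gser, ← Finset.prod_mul_distrib]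
  apply Finset.prod_eq_one
  intro j _
  have hfun : (fun k => (X : Polynomial ℚ) ^ (j * k))
      = fun k => ((X : Polynomial ℚ) ^ j) ^ k := funext fun k => pow_mul X j k
  rw [hfun]
  exact geom_inv (X ^ j)

end series
section final
variable {a n : ℕ} [NeZero a] (L : Finset (Fin a))

lemma Amaj_coeff (u : ℕ) :
    (Amaj a n L).coeff u
      = ∑ σ : ColPerm a n, (if u = desL L σ then (X : Polynomial ℚ) ^ rmajL L σ else 0) := by
  rw [Amaj, Polynomial.finset_sum_coeff]
  apply Finset.sum_congr rfl
  intro σ _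
  rw [Polynomial.coeff_C_mul, Polynomial.coeff_X_pow]
  split <;> simp_all

lemma mk_eq (hn : 0 < n) :
    PowerSeries.mk (fun s =>
        ((a : Polynomial ℚ) * (∑ j ∈ Finset.range (s + 1), X ^ j) -
          (L.card : Polynomial ℚ)) ^ n)
      = ((Amaj a n L : Polynomial (Polynomial ℚ)) : PowerSeries (Polynomial ℚ)) * Gser n := by
  apply PowerSeries.ext
  intro s
  rw [PowerSeries.coeff_mk, PowerSeries.coeff_mul, main_count L hn s]
  have estep : ∀ p ∈ Finset.HasAntidiagonal.antidiagonal s,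
      (PowerSeries.coeff p.1) ((Amaj a n L : Polynomial (Polynomial ℚ)) :
          PowerSeries (Polynomial ℚ)) * (PowerSeries.coeff p.2) (Gser n)
        = (Amaj a n L).coeff p.1 * Kp n p.2 := by
    intro p _
    rw [Polynomial.coeff_coe, coeff_Gser]
  rw [Finset.sum_congr rfl estep, Finset.Nat.sum_antidiagonal_eq_sum_range_succ_mk]
  have estep2 : ∀ k ∈ Finset.range (s+1),
      (Amaj a n L).coeff k * Kp n (s - k)
        = ∑ σ : ColPerm a n,
            (if k = desL L σ then (X : Polynomial ℚ) ^ rmajL L σ * Kp n (s - k) else 0) := by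
    intro k _
    rw [Amaj_coeff, Finset.sum_mul]
    apply Finset.sum_congr rfl
    intro σ _
    rw [ite_mul, zero_mul]
  rw [Finset.sum_congr rfl estep2, Finset.sum_comm]
  apply Finset.sum_congr rfl
  intro σ _
  have estep3 : ∀ k ∈ Finset.range (s+1),
      (if k = desL L σ then (X : Polynomial ℚ) ^ rmajL L σ * Kp n (s - k) else 0)
        = (if k = desL L σ then (X : Polynomial ℚ) ^ rmajL L σ * Kp n (s - desL L σ) else 0) := by
    intro k _
    split
    · next h => rw [h]
    · rfl
  rw [Finset.sum_congr rfl estep3, Finset.sum_ite_eq' (Finset.range (s+1)) (desL L σ)]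
  by_cases h : desL L σ ≤ s <;> simp [h, Nat.lt_succ_iff]

end final
end CarlitzAux

/-- Generalized Carlitz quotient formula, in the equivalent product form:
`A_{a,ℓ,n}(t,q) = (t;q)_{n+1} · Σ_{s≥0} t^s (a[s+1]_q − ℓ)^n` for `n > 0`, as formal
power series in `t` with coefficients in `ℚ[q]` (so dividing by the unit `(t;q)_{n+1}`
gives `A_{a,ℓ,n}(t,q)/(t;q)_{n+1} = Σ_{s≥0} t^s (a[s+1]_q − ℓ)^n`). -/
theorem Amaj_quotient_formula (a n : ℕ) [NeZero a] (L : Finset (Fin a)) (hn : 1 ≤ n) :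
    (Amaj a n L : PowerSeries (Polynomial ℚ)) =
      (∏ j ∈ Finset.range (n + 1),
          (1 - PowerSeries.C (R := Polynomial ℚ) (X ^ j) * PowerSeries.X)) *
        PowerSeries.mk (fun s =>
          ((a : Polynomial ℚ) * (∑ j ∈ Finset.range (s + 1), X ^ j) -
            (L.card : Polynomial ℚ)) ^ n) := by
  rw [CarlitzAux.mk_eq L hn]
  rw [show (∏ j ∈ Finset.range (n + 1),
      (1 - PowerSeries.C (R := Polynomial ℚ) (X ^ j) * PowerSeries.X)) *
      (((Amaj a n L : Polynomial (Polynomial ℚ)) : PowerSeries (Polynomial ℚ)) *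
        CarlitzAux.Gser n)
    = ((Amaj a n L : Polynomial (Polynomial ℚ)) : PowerSeries (Polynomial ℚ)) *
      ((∏ j ∈ Finset.range (n + 1),
        (1 - PowerSeries.C (R := Polynomial ℚ) (X ^ j) * PowerSeries.X)) *
        CarlitzAux.Gser n) by ring]
  rw [CarlitzAux.prod_inv n, mul_one]
end
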